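/- arXiv:1701.02709 — 6 statements merged into one kernel-verified Lean document; each statement's English description precedes it below -/
import Mathlib

section
/- Let L be a positive definite moment functional on real polynomials in d variables and let {P_α^n : |α| = n, n ∈ ℕ} be a family of polynomials of respective degrees n, spanning Π_n^d degree-wise, such that for each n every P_α^n is orthogonal to all polynomials of degree less than n; set ℙ_{−1} := 0. Then for every n ∈ ℕ and every 1 ≤ i ≤ d there exist unique real matrices A_{n,i} of size r_n^d × r_{n+1}^d, B_{n,i} of size r_n^d × r_n^d, and C_{n,i} of size r_n^d × r_{n−1}^d such that x_i ℙ_n(x) = A_{n,i} ℙ_{n+1}(x) + B_{n,i} ℙ_n(x) + C_{n,i} ℙ_{n−1}(x) as an identity of vectors of polynomials. Moreover, with H_n := L(ℙ_n ℙ_nᵀ) (the matrix with entries L(P_α^n P_β^n)), these matrices satisfy A_{n,i} H_{n+1} = L(x_i ℙ_n ℙ_{n+1}ᵀ), B_{n,i} H_n = L(x_i ℙ_n ℙ_nᵀ), and A_{n,i} H_{n+1} = H_n C_{n+1,i}ᵀ. -/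
open MvPolynomial Matrix MeasureTheory

noncomputable section

/-- Real polynomials in `d` variables. -/
abbrev MPoly (d : ℕ) : Type := MvPolynomial (Fin d) ℝ

/-- Multi-indices `α ∈ ℕ^d` of total degree `n`; there are `r_n^d = binom (n+d-1) n` of them. -/
abbrev Idx (d n : ℕ) : Type := {α : Fin d → ℕ // ∑ i, α i = n}

instance (d n : ℕ) : Fintype (Idx d n) :=
  Fintype.subtype (Finset.Nat.antidiagonalTuple d n)
    (fun _ => Finset.Nat.mem_antidiagonalTuple)

/-- The monomial `x^α`. -/
def mono {d : ℕ} (α : Fin d → ℕ) : MPoly d :=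
  MvPolynomial.monomial (Finsupp.equivFunOnFinite.symm α) 1

/-- Multi-indices `α ∈ ℕ^d` of total degree at most `n`. -/
abbrev IdxLe (d n : ℕ) : Type := {α : Fin d → ℕ // ∑ i, α i ≤ n}

instance (d n : ℕ) : Fintype (IdxLe d n) :=
  Fintype.subtype ((Finset.range (n+1)).biUnion fun k => Finset.Nat.antidiagonalTuple d k)
    (fun α => by
      simp only [Finset.mem_biUnion, Finset.mem_range, Finset.Nat.mem_antidiagonalTuple,
        Nat.lt_succ_iff]
      exact ⟨fun ⟨k, hk, he⟩ => he ▸ hk, fun h => ⟨_, h, rfl⟩⟩)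

/-- `P` is a polynomial of total degree strictly less than `n` (the zero polynomial belongs
to every such class). -/
def IsDegLt {d : ℕ} (P : MPoly d) (n : ℕ) : Prop := P = 0 ∨ P.totalDegree < n

/-- The family `{P m α : |α| = m ≤ n}` spans `Π_n^d`, the polynomials of total degree at
most `n`, for every `n`. -/
def SpansPi {d : ℕ} (P : ∀ n, Idx d n → MPoly d) : Prop :=
  ∀ n, Submodule.span ℝ {p | ∃ m, m ≤ n ∧ ∃ α : Idx d m, p = P m α} =
    MvPolynomial.restrictTotalDegree (Fin d) ℝ n

variable {d : ℕ}

/-- The matrix `H_n = L(ℙ_n ℙ_nᵀ)`. -/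
def Hmat (L : MPoly d →ₗ[ℝ] ℝ) (P : ∀ n, Idx d n → MPoly d) (n : ℕ) :
    Matrix (Idx d n) (Idx d n) ℝ :=
  Matrix.of fun α β => L (P n α * P n β)

lemma isDegLt_mono {p : MPoly d} {n m : ℕ} (h : IsDegLt p n) (hnm : n ≤ m) : IsDegLt p m :=
  h.imp id fun h' => lt_of_lt_of_le h' hnm

lemma isDegLt_zero_poly (n : ℕ) : IsDegLt (0 : MPoly d) n := Or.inl rfl

lemma isDegLt_add {p q : MPoly d} {n : ℕ} (hp : IsDegLt p n) (hq : IsDegLt q n) :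
    IsDegLt (p + q) n := by
  rcases hp with rfl | hp
  · simpa using hq
  rcases hq with rfl | hq
  · rw [add_zero]; exact Or.inr hp
  · by_cases h : p + q = 0
    · exact Or.inl h
    · exact Or.inr (lt_of_le_of_lt (totalDegree_add p q) (max_lt hp hq))

lemma isDegLt_smul {p : MPoly d} {n : ℕ} (c : ℝ) (hp : IsDegLt p n) : IsDegLt (c • p) n := by
  rcases hp with rfl | hp
  · exact Or.inl (smul_zero c)
  · by_cases h : c • p = 0
    · exact Or.inl h
    · exact Or.inr (lt_of_le_of_lt (totalDegree_smul_le c p) hp)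

lemma isDegLt_sum {ι : Type*} {s : Finset ι} {f : ι → MPoly d} {n : ℕ}
    (h : ∀ j ∈ s, IsDegLt (f j) n) : IsDegLt (∑ j ∈ s, f j) n := by
  classical
  induction s using Finset.induction with
  | empty => simpa using isDegLt_zero_poly n
  | @insert a s ha ih =>
    rw [Finset.sum_insert ha]
    exact isDegLt_add (h _ (Finset.mem_insert_self a s))
      (ih fun j hj => h j (Finset.mem_insert_of_mem hj))

lemma isDegLt_X_mul {p : MPoly d} {n : ℕ} (i : Fin d) (hp : IsDegLt p n) :
    IsDegLt (X i * p) (n + 1) := by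
  rcases hp with rfl | hp
  · exact Or.inl (mul_zero _)
  · refine Or.inr (lt_of_le_of_lt (totalDegree_mul _ _) ?_)
    rw [totalDegree_X]
    omega

lemma L_mul_sum (L : MPoly d →ₗ[ℝ] ℝ) (p : MPoly d) {ι : Type*} (s : Finset ι)
    (f : ι → ℝ) (g : ι → MPoly d) :
    L (p * ∑ j ∈ s, f j • g j) = ∑ j ∈ s, f j * L (p * g j) := by
  rw [Finset.mul_sum, map_sum]
  exact Finset.sum_congr rfl fun j _ => by rw [mul_smul_comm, _root_.map_smul, smul_eq_mul]

lemma L_sum_mul (L : MPoly d →ₗ[ℝ] ℝ) {ι : Type*} (s : Finset ι)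
    (f : ι → ℝ) (g : ι → MPoly d) (p : MPoly d) :
    L ((∑ j ∈ s, f j • g j) * p) = ∑ j ∈ s, f j * L (g j * p) := by
  rw [Finset.sum_mul, map_sum]
  exact Finset.sum_congr rfl fun j _ => by rw [smul_mul_assoc, _root_.map_smul, smul_eq_mul]

/-- index type for the family of all `P m α` with `m ≤ n`. -/
abbrev SIdx (d n : ℕ) : Type := (m : Fin (n+1)) × Idx d ↑m

def sidxEquiv (d n : ℕ) : SIdx d n ≃ IdxLe d n where
  toFun s := ⟨s.2.1, by rw [s.2.2]; exact Nat.lt_succ_iff.mp s.1.2⟩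
  invFun β := ⟨⟨∑ i, β.1 i, Nat.lt_succ_of_le β.2⟩, ⟨β.1, rfl⟩⟩
  left_inv := by
    rintro ⟨⟨m, hm⟩, α, hα⟩
    dsimp only at hα ⊢
    subst hα
    rfl
  right_inv β := rfl

def finsuppEquivIdxLe (d n : ℕ) :
    {s : Fin d →₀ ℕ // s ∈ {t : Fin d →₀ ℕ | (t.sum fun _ e => e) ≤ n}} ≃ IdxLe d n where
  toFun s := ⟨s.1, by
    have : (s.1.sum fun _ e => e) = ∑ i, s.1 i := Finsupp.sum_fintype _ _ (fun _ => rfl)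
    rw [← this]; exact s.2⟩
  invFun β := ⟨Finsupp.equivFunOnFinite.symm β.1, by
    have : ((Finsupp.equivFunOnFinite.symm β.1).sum fun _ e => e)
        = ∑ i, (Finsupp.equivFunOnFinite.symm β.1) i :=
      Finsupp.sum_fintype _ _ (fun _ => rfl)
    simp only [Set.mem_setOf_eq, this]
    exact β.2⟩
  left_inv s := by
    ext x
    simp [Finsupp.equivFunOnFinite]
  right_inv β := by
    ext x
    simp [Finsupp.equivFunOnFinite]
    rfl

lemma finrank_rtd (n : ℕ) :
    Module.finrank ℝ (restrictTotalDegree (Fin d) ℝ n) = Fintype.card (IdxLe d n) := by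
  classical
  have b : Module.Basis {s : Fin d →₀ ℕ // s ∈ {t : Fin d →₀ ℕ | (t.sum fun _ e => e) ≤ n}} ℝ
      (restrictTotalDegree (Fin d) ℝ n) := basisRestrictSupport ℝ _
  have b' := b.reindex (finsuppEquivIdxLe d n)
  exact Module.finrank_eq_card_basis b'

lemma layer_indep (P : ∀ n, Idx d n → MPoly d)
    (hdeg : ∀ n (α : Idx d n), (P n α).totalDegree = n)
    (hspan : SpansPi P) (m : ℕ) :
    LinearIndependent ℝ (P m) := by
  classical
  set V := restrictTotalDegree (Fin d) ℝ m with hV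
  have hmem : ∀ s : SIdx d m, P ↑s.1 s.2 ∈ V := fun s => by
    rw [hV, mem_restrictTotalDegree, hdeg]; exact Nat.lt_succ_iff.mp s.1.2
  set F : SIdx d m → V := fun s => ⟨P ↑s.1 s.2, hmem s⟩ with hF
  have himg : V.subtype '' Set.range F = {p | ∃ k, k ≤ m ∧ ∃ α : Idx d k, p = P k α} := by
    ext p
    constructor
    · rintro ⟨_, ⟨s, rfl⟩, rfl⟩
      exact ⟨↑s.1, Nat.lt_succ_iff.mp s.1.2, s.2, rfl⟩
    · rintro ⟨k, hk, α, rfl⟩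
      exact ⟨F ⟨⟨k, Nat.lt_succ_of_le hk⟩, α⟩, ⟨⟨⟨k, Nat.lt_succ_of_le hk⟩, α⟩, rfl⟩, rfl⟩
  have hspan' : ⊤ ≤ Submodule.span ℝ (Set.range F) := by
    have h1 : Submodule.map V.subtype (Submodule.span ℝ (Set.range F)) =
        Submodule.map V.subtype ⊤ := by
      rw [Submodule.map_span, himg, hspan m, Submodule.map_top, Submodule.range_subtype]
    exact ge_of_eq (Submodule.map_injective_of_injective V.injective_subtype h1)
  have hcard : Fintype.card (SIdx d m) = Module.finrank ℝ V := by
    rw [Fintype.card_congr (sidxEquiv d m), finrank_rtd]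
  have hindF : LinearIndependent ℝ F :=
    linearIndependent_of_top_le_span_of_card_eq_finrank hspan' hcard
  have hind2 : LinearIndependent ℝ fun s : SIdx d m => P ↑s.1 s.2 :=
    hindF.map' V.subtype (Submodule.ker_subtype V)
  exact hind2.comp (fun α : Idx d m => (⟨Fin.last m, α⟩ : SIdx d m)) (fun a b h => Subtype.ext (congrArg (fun s : SIdx d m => s.2.1) h))

lemma isDegLt_layer (P : ∀ n, Idx d n → MPoly d)
    (hdeg : ∀ n (α : Idx d n), (P n α).totalDegree = n)
    {m k : ℕ} (hmk : m < k) (cc : Idx d m → ℝ) :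
    IsDegLt (∑ β, cc β • P m β) k :=
  isDegLt_sum fun β _ => isDegLt_smul _ (Or.inr (by rw [hdeg]; exact hmk))

lemma layers_zero (L : MPoly d →ₗ[ℝ] ℝ)
    (hL : ∀ p : MPoly d, p ≠ 0 → 0 < L (p * p))
    (P : ∀ n, Idx d n → MPoly d)
    (hdeg : ∀ n (α : Idx d n), (P n α).totalDegree = n)
    (hspan : SpansPi P)
    (horth : ∀ n (α : Idx d n) (R : MPoly d), IsDegLt R n → L (P n α * R) = 0)
    {m : ℕ} (c : Idx d m → ℝ) (R : MPoly d) (hR : IsDegLt R m)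
    (h : (∑ β, c β • P m β) + R = 0) :
    (∀ β, c β = 0) ∧ R = 0 := by
  classical
  set q : MPoly d := ∑ β, c β • P m β with hq
  have hRq : L (R * q) = 0 := by
    rw [hq, L_mul_sum]
    refine Finset.sum_eq_zero fun β _ => ?_
    rw [mul_comm R, horth m β R hR, mul_zero]
  have hqq : L (q * q) = 0 := by
    have h0 : L ((q + R) * q) = 0 := by rw [h, zero_mul, map_zero]
    have h1 : q * q = (q + R) * q - R * q := by ring
    rw [h1, map_sub, h0, hRq, sub_zero]
  have hq0 : q = 0 := by
    by_contra hne
    exact absurd hqq (ne_of_gt (hL q hne))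
  have hli := layer_indep P hdeg hspan m
  rw [Fintype.linearIndependent_iff] at hli
  refine ⟨hli c hq0, ?_⟩
  rw [hq0, zero_add] at h
  exact h

lemma three_layers_zero (L : MPoly d →ₗ[ℝ] ℝ)
    (hL : ∀ p : MPoly d, p ≠ 0 → 0 < L (p * p))
    (P : ∀ n, Idx d n → MPoly d)
    (hdeg : ∀ n (α : Idx d n), (P n α).totalDegree = n)
    (hspan : SpansPi P)
    (horth : ∀ n (α : Idx d n) (R : MPoly d), IsDegLt R n → L (P n α * R) = 0)
    {n : ℕ} (a : Idx d (n+2) → ℝ) (b : Idx d (n+1) → ℝ) (c : Idx d n → ℝ)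
    (h : (∑ β, a β • P (n+2) β) + (∑ β, b β • P (n+1) β) + (∑ β, c β • P n β) = 0) :
    (∀ β, a β = 0) ∧ (∀ β, b β = 0) ∧ (∀ β, c β = 0) := by
  obtain ⟨ha, hrest⟩ := layers_zero L hL P hdeg hspan horth a
    ((∑ β, b β • P (n+1) β) + (∑ β, c β • P n β))
    (isDegLt_add (isDegLt_layer P hdeg (by omega) b) (isDegLt_layer P hdeg (by omega) c))
    (by rw [← add_assoc]; exact h)
  obtain ⟨hb, hc0⟩ := layers_zero L hL P hdeg hspan horth b
    (∑ β, c β • P n β) (isDegLt_layer P hdeg (by omega) c) hrest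
  obtain ⟨hc, -⟩ := layers_zero L hL P hdeg hspan horth c 0 (isDegLt_zero_poly n)
    (by rw [add_zero]; exact hc0)
  exact ⟨ha, hb, hc⟩

lemma two_layers_zero (L : MPoly d →ₗ[ℝ] ℝ)
    (hL : ∀ p : MPoly d, p ≠ 0 → 0 < L (p * p))
    (P : ∀ n, Idx d n → MPoly d)
    (hdeg : ∀ n (α : Idx d n), (P n α).totalDegree = n)
    (hspan : SpansPi P)
    (horth : ∀ n (α : Idx d n) (R : MPoly d), IsDegLt R n → L (P n α * R) = 0)
    (a : Idx d 1 → ℝ) (b : Idx d 0 → ℝ)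
    (h : (∑ β, a β • P 1 β) + (∑ β, b β • P 0 β) = 0) :
    (∀ β, a β = 0) ∧ (∀ β, b β = 0) := by
  obtain ⟨ha, hrest⟩ := layers_zero L hL P hdeg hspan horth a
    (∑ β, b β • P 0 β) (isDegLt_layer P hdeg (by omega) b) h
  obtain ⟨hb, -⟩ := layers_zero L hL P hdeg hspan horth b 0 (isDegLt_zero_poly 0)
    (by rw [add_zero]; exact hrest)
  exact ⟨ha, hb⟩

set_option maxHeartbeats 1000000 in
lemma expandP (P : ∀ n, Idx d n → MPoly d)
    (hspan : SpansPi P) (N : ℕ) (p : MPoly d) (hp : p.totalDegree ≤ N) :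
    ∃ G : ∀ m : ℕ, Idx d m → ℝ,
      p = ∑ m ∈ Finset.range (N+1), ∑ β, G m β • P m β := by
  classical
  have hmem : p ∈ restrictTotalDegree (Fin d) ℝ N :=
    (mem_restrictTotalDegree _ _ p).mpr hp
  rw [← hspan N] at hmem
  have hset : {pp | ∃ m, m ≤ N ∧ ∃ α : Idx d m, pp = P m α} =
      Set.range (fun s : SIdx d N => P ↑s.1 s.2) := by
    ext pp
    constructor
    · rintro ⟨m, hm, α, rfl⟩
      exact ⟨⟨⟨m, Nat.lt_succ_of_le hm⟩, α⟩, rfl⟩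
    · rintro ⟨s, rfl⟩
      exact ⟨↑s.1, Nat.lt_succ_iff.mp s.1.2, s.2, rfl⟩
  rw [hset] at hmem
  obtain ⟨g, hg⟩ := (Submodule.mem_span_range_iff_exists_fun ℝ).mp hmem
  refine ⟨fun m => if h : m < N+1 then (fun β => g ⟨⟨m, h⟩, β⟩) else (0 : Idx d m → ℝ), ?_⟩
  rw [← hg]
  have h1 : (∑ s : SIdx d N, g s • P ↑s.1 s.2) =
      ∑ m : Fin (N+1), ∑ β : Idx d ↑m, g ⟨m, β⟩ • P ↑m β := by
    rw [← Finset.univ_sigma_univ, Finset.sum_sigma]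
  rw [h1]
  refine Eq.trans ?_ (Fin.sum_univ_eq_sum_range
    (fun k => ∑ β : Idx d k,
      (if h : k < N+1 then (fun β => g ⟨⟨k, h⟩, β⟩) else (0 : Idx d k → ℝ)) β • P k β)
    (N+1))
  refine Finset.sum_congr rfl fun m _ => Finset.sum_congr rfl fun β _ => ?_
  rw [dif_pos m.2]

lemma expand_three (L : MPoly d →ₗ[ℝ] ℝ)
    (hL : ∀ p : MPoly d, p ≠ 0 → 0 < L (p * p))
    (P : ∀ n, Idx d n → MPoly d)
    (hdeg : ∀ n (α : Idx d n), (P n α).totalDegree = n)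
    (hspan : SpansPi P)
    (horth : ∀ n (α : Idx d n) (R : MPoly d), IsDegLt R n → L (P n α * R) = 0)
    (i : Fin d) (N : ℕ) (α : Idx d N) :
    ∃ G : ∀ m : ℕ, Idx d m → ℝ,
      X i * P N α = ∑ m ∈ Finset.Ico (N-1) (N+2), ∑ β, G m β • P m β := by
  classical
  have hdegX : (X i * P N α).totalDegree ≤ N + 1 := by
    refine le_trans (totalDegree_mul _ _) ?_
    rw [totalDegree_X, hdeg]
    omega
  obtain ⟨G, hG⟩ := expandP P hspan (N+1) (X i * P N α) hdegX
  refine ⟨G, ?_⟩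
  set S : ℕ → MPoly d := fun m => ∑ β, G m β • P m β with hS
  have hsplit : ∑ m ∈ Finset.range (N+2), S m =
      (∑ m ∈ Finset.range (N-1), S m) + ∑ m ∈ Finset.Ico (N-1) (N+2), S m := by
    rw [Finset.range_eq_Ico, Finset.range_eq_Ico]
    exact (Finset.sum_Ico_consecutive S (Nat.zero_le (N-1)) (show N-1 ≤ N+2 by omega)).symm
  set low := ∑ m ∈ Finset.range (N-1), S m with hlow
  have hlowdeg : IsDegLt low (N-1) :=
    isDegLt_sum fun m hm => isDegLt_layer P hdeg (Finset.mem_range.mp hm) _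
  have hXlow : IsDegLt (X i * low) N := by
    cases N with
    | zero =>
      have h0 : low = 0 := by rw [hlow]; simp
      rw [h0, mul_zero]
      exact isDegLt_zero_poly 0
    | succ n => exact isDegLt_X_mul i hlowdeg
  have hkey : X i * P N α = low + ∑ m ∈ Finset.Ico (N-1) (N+2), S m := by
    rw [hG, ← hsplit]
  have hlowlow : L (low * low) = 0 := by
    have e1 : L (low * (X i * P N α)) = 0 := by
      rw [show low * (X i * P N α) = P N α * (X i * low) by ring]
      exact horth N α _ hXlow
    have e2 : L (low * ∑ m ∈ Finset.Ico (N-1) (N+2), S m) = 0 := by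
      rw [Finset.mul_sum, map_sum]
      refine Finset.sum_eq_zero fun m hm => ?_
      rw [hS]
      rw [L_mul_sum]
      refine Finset.sum_eq_zero fun β _ => ?_
      rw [mul_comm low,
        horth m β low (isDegLt_mono hlowdeg (Finset.mem_Ico.mp hm).1), mul_zero]
    have e3 : L (low * (low + ∑ m ∈ Finset.Ico (N-1) (N+2), S m)) = 0 := by
      rw [← hkey]; exact e1
    rw [mul_add, map_add, e2, add_zero] at e3
    exact e3
  have hlow0 : low = 0 := by
    by_contra hne
    exact absurd hlowlow (ne_of_gt (hL low hne))
  rw [hkey, hlow0, zero_add]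

lemma exists_base (L : MPoly d →ₗ[ℝ] ℝ)
    (hL : ∀ p : MPoly d, p ≠ 0 → 0 < L (p * p))
    (P : ∀ n, Idx d n → MPoly d)
    (hdeg : ∀ n (α : Idx d n), (P n α).totalDegree = n)
    (hspan : SpansPi P)
    (horth : ∀ n (α : Idx d n) (R : MPoly d), IsDegLt R n → L (P n α * R) = 0)
    (i : Fin d) (α : Idx d 0) :
    ∃ ab : (Idx d 1 → ℝ) × (Idx d 0 → ℝ),
      X i * P 0 α = (∑ β, ab.1 β • P 1 β) + ∑ β, ab.2 β • P 0 β := by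
  obtain ⟨G, hG⟩ := expand_three L hL P hdeg hspan horth i 0 α
  refine ⟨(G 1, G 0), ?_⟩
  rw [hG]
  rw [Finset.sum_Ico_succ_top (by omega), Finset.sum_Ico_succ_top (by omega),
    Finset.Ico_self, Finset.sum_empty, zero_add]
  rw [add_comm]

lemma exists_step (L : MPoly d →ₗ[ℝ] ℝ)
    (hL : ∀ p : MPoly d, p ≠ 0 → 0 < L (p * p))
    (P : ∀ n, Idx d n → MPoly d)
    (hdeg : ∀ n (α : Idx d n), (P n α).totalDegree = n)
    (hspan : SpansPi P)
    (horth : ∀ n (α : Idx d n) (R : MPoly d), IsDegLt R n → L (P n α * R) = 0)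
    (i : Fin d) (n : ℕ) (α : Idx d (n+1)) :
    ∃ abc : (Idx d (n+2) → ℝ) × (Idx d (n+1) → ℝ) × (Idx d n → ℝ),
      X i * P (n+1) α = (∑ β, abc.1 β • P (n+2) β) + (∑ β, abc.2.1 β • P (n+1) β)
        + ∑ β, abc.2.2 β • P n β := by
  obtain ⟨G, hG⟩ := expand_three L hL P hdeg hspan horth i (n+1) α
  refine ⟨(G (n+2), G (n+1), G n), ?_⟩
  rw [hG]
  rw [show (n+1) - 1 = n from rfl, show n + 1 + 2 = n + 3 from rfl]
  rw [Finset.sum_Ico_succ_top (by omega), Finset.sum_Ico_succ_top (by omega),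
    Finset.sum_Ico_succ_top (by omega), Finset.Ico_self, Finset.sum_empty, zero_add]
  ring

section Ident
variable (L : MPoly d →ₗ[ℝ] ℝ) (P : ∀ n, Idx d n → MPoly d)

lemma L_P_P (hdeg : ∀ n (α : Idx d n), (P n α).totalDegree = n)
    (horth : ∀ n (α : Idx d n) (R : MPoly d), IsDegLt R n → L (P n α * R) = 0)
    {k m : ℕ} (hkm : k ≠ m) (γ : Idx d k) (β : Idx d m) :
    L (P k γ * P m β) = 0 := by
  rcases lt_or_gt_of_ne hkm with h | h
  · rw [mul_comm]
    exact horth m β _ (Or.inr (by rw [hdeg]; exact h))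
  · exact horth k γ _ (Or.inr (by rw [hdeg]; exact h))

lemma L_layer_mul_P (hdeg : ∀ n (α : Idx d n), (P n α).totalDegree = n)
    (horth : ∀ n (α : Idx d n) (R : MPoly d), IsDegLt R n → L (P n α * R) = 0)
    {k m : ℕ} (hkm : k ≠ m) (c : Idx d k → ℝ) (β : Idx d m) :
    L ((∑ γ, c γ • P k γ) * P m β) = 0 := by
  rw [L_sum_mul]
  exact Finset.sum_eq_zero fun γ _ => by
    rw [L_P_P L P hdeg horth hkm γ β, mul_zero]

lemma L_P_mul_layer (hdeg : ∀ n (α : Idx d n), (P n α).totalDegree = n)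
    (horth : ∀ n (α : Idx d n) (R : MPoly d), IsDegLt R n → L (P n α * R) = 0)
    {k m : ℕ} (hkm : k ≠ m) (β : Idx d m) (c : Idx d k → ℝ) :
    L (P m β * ∑ γ, c γ • P k γ) = 0 := by
  rw [L_mul_sum]
  exact Finset.sum_eq_zero fun γ _ => by
    rw [mul_comm (P m β), L_P_P L P hdeg horth hkm γ β, mul_zero]

lemma identities
    (hdeg : ∀ n (α : Idx d n), (P n α).totalDegree = n)
    (horth : ∀ n (α : Idx d n) (R : MPoly d), IsDegLt R n → L (P n α * R) = 0)
    (i : Fin d)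
    (A : ∀ n : ℕ, Matrix (Idx d n) (Idx d (n+1)) ℝ)
    (B : ∀ n : ℕ, Matrix (Idx d n) (Idx d n) ℝ)
    (Cm : ∀ n : ℕ, Matrix (Idx d (n+1)) (Idx d n) ℝ)
    (h0 : ∀ α : Idx d 0, X i * P 0 α =
      (∑ β, A 0 α β • P 1 β) + ∑ β, B 0 α β • P 0 β)
    (hs : ∀ n (α : Idx d (n+1)), X i * P (n+1) α =
      (∑ β, A (n+1) α β • P (n+2) β) + (∑ β, B (n+1) α β • P (n+1) β)
        + ∑ β, Cm n α β • P n β)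
    (n : ℕ) :
    A n * Hmat L P (n+1) =
      Matrix.of (fun (α : Idx d n) (β : Idx d (n+1)) => L (X i * P n α * P (n+1) β)) ∧
    B n * Hmat L P n =
      Matrix.of (fun (α β : Idx d n) => L (X i * P n α * P n β)) ∧
    A n * Hmat L P (n+1) = Hmat L P n * (Cm n)ᵀ := by
  have idA : A n * Hmat L P (n+1) =
      Matrix.of (fun (α : Idx d n) (β : Idx d (n+1)) => L (X i * P n α * P (n+1) β)) := by
    refine Matrix.ext fun α β => ?_
    rw [Matrix.mul_apply]
    have e1 : ∑ γ, A n α γ * (Hmat L P (n+1)) γ β =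
        L ((∑ γ, A n α γ • P (n+1) γ) * P (n+1) β) := (L_sum_mul L _ _ _ _).symm
    rw [e1]
    cases n with
    | zero =>
      have hA : (∑ γ, A 0 α γ • P 1 γ) =
          X i * P 0 α - ∑ γ, B 0 α γ • P 0 γ := by
        rw [h0 α]; ring
      rw [hA, sub_mul, map_sub, L_layer_mul_P L P hdeg horth (by omega) _ β, sub_zero]
      rfl
    | succ m =>
      have hA : (∑ γ, A (m+1) α γ • P (m+2) γ) =
          X i * P (m+1) α - (∑ γ, B (m+1) α γ • P (m+1) γ) - ∑ γ, Cm m α γ • P m γ := by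
        rw [hs m α]; ring
      rw [hA, sub_mul, sub_mul, map_sub, map_sub,
        L_layer_mul_P L P hdeg horth (by omega) _ β,
        L_layer_mul_P L P hdeg horth (by omega) _ β, sub_zero, sub_zero]
      rfl
  have idB : B n * Hmat L P n =
      Matrix.of (fun (α β : Idx d n) => L (X i * P n α * P n β)) := by
    refine Matrix.ext fun α β => ?_
    rw [Matrix.mul_apply]
    have e1 : ∑ γ, B n α γ * (Hmat L P n) γ β =
        L ((∑ γ, B n α γ • P n γ) * P n β) := (L_sum_mul L _ _ _ _).symm
    rw [e1]
    cases n with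
    | zero =>
      have hB : (∑ γ, B 0 α γ • P 0 γ) =
          X i * P 0 α - ∑ γ, A 0 α γ • P 1 γ := by
        rw [h0 α]; ring
      rw [hB, sub_mul, map_sub, L_layer_mul_P L P hdeg horth (by omega) _ β, sub_zero]
      rfl
    | succ m =>
      have hB : (∑ γ, B (m+1) α γ • P (m+1) γ) =
          X i * P (m+1) α - (∑ γ, A (m+1) α γ • P (m+2) γ) - ∑ γ, Cm m α γ • P m γ := by
        rw [hs m α]; ring
      rw [hB, sub_mul, sub_mul, map_sub, map_sub,
        L_layer_mul_P L P hdeg horth (by omega) _ β,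
        L_layer_mul_P L P hdeg horth (by omega) _ β, sub_zero, sub_zero]
      rfl
  refine ⟨idA, idB, idA.trans ?_⟩
  refine Matrix.ext fun α β => ?_
  rw [Matrix.mul_apply]
  have e1 : ∑ γ, (Hmat L P n) α γ * (Cm n)ᵀ γ β =
      L (P n α * ∑ γ, Cm n β γ • P n γ) := by
    rw [L_mul_sum]
    exact Finset.sum_congr rfl fun γ _ => by
      rw [Matrix.transpose_apply, mul_comm]; rfl
  rw [e1]
  have hC : (∑ γ, Cm n β γ • P n γ) =
      X i * P (n+1) β - (∑ γ, A (n+1) β γ • P (n+2) γ) - ∑ γ, B (n+1) β γ • P (n+1) γ := by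
    rw [hs n β]; ring
  rw [hC, mul_sub, mul_sub, map_sub, map_sub,
    L_P_mul_layer L P hdeg horth (by omega) α _,
    L_P_mul_layer L P hdeg horth (by omega) α _, sub_zero, sub_zero]
  have : P n α * (X i * P (n+1) β) = X i * P n α * P (n+1) β := by ring
  rw [this]
  rfl

lemma uniq
    (hL : ∀ p : MPoly d, p ≠ 0 → 0 < L (p * p))
    (hdeg : ∀ n (α : Idx d n), (P n α).totalDegree = n)
    (hspan : SpansPi P)
    (horth : ∀ n (α : Idx d n) (R : MPoly d), IsDegLt R n → L (P n α * R) = 0)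
    (i : Fin d)
    (A A' : ∀ n : ℕ, Matrix (Idx d n) (Idx d (n+1)) ℝ)
    (B B' : ∀ n : ℕ, Matrix (Idx d n) (Idx d n) ℝ)
    (Cm C' : ∀ n : ℕ, Matrix (Idx d (n+1)) (Idx d n) ℝ)
    (h0 : ∀ α : Idx d 0, X i * P 0 α =
      (∑ β, A 0 α β • P 1 β) + ∑ β, B 0 α β • P 0 β)
    (hs : ∀ n (α : Idx d (n+1)), X i * P (n+1) α =
      (∑ β, A (n+1) α β • P (n+2) β) + (∑ β, B (n+1) α β • P (n+1) β)
        + ∑ β, Cm n α β • P n β)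
    (h0' : ∀ α : Idx d 0, X i * P 0 α =
      (∑ β, A' 0 α β • P 1 β) + ∑ β, B' 0 α β • P 0 β)
    (hs' : ∀ n (α : Idx d (n+1)), X i * P (n+1) α =
      (∑ β, A' (n+1) α β • P (n+2) β) + (∑ β, B' (n+1) α β • P (n+1) β)
        + ∑ β, C' n α β • P n β) :
    A = A' ∧ B = B' ∧ Cm = C' := by
  have key0 : ∀ α : Idx d 0,
      (∀ β, A 0 α β = A' 0 α β) ∧ (∀ β, B 0 α β = B' 0 α β) := by
    intro α
    have heq : (∑ β, (A 0 α β - A' 0 α β) • P 1 β)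
        + (∑ β, (B 0 α β - B' 0 α β) • P 0 β) = 0 := by
      simp only [sub_smul, Finset.sum_sub_distrib]
      have h := (h0 α).symm.trans (h0' α)
      linear_combination h
    obtain ⟨ha, hb⟩ := two_layers_zero L hL P hdeg hspan horth _ _ heq
    exact ⟨fun β => sub_eq_zero.mp (ha β), fun β => sub_eq_zero.mp (hb β)⟩
  have keyS : ∀ n, ∀ α : Idx d (n+1),
      (∀ β, A (n+1) α β = A' (n+1) α β) ∧ (∀ β, B (n+1) α β = B' (n+1) α β)
        ∧ (∀ β, Cm n α β = C' n α β) := by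
    intro n α
    have heq : (∑ β, (A (n+1) α β - A' (n+1) α β) • P (n+2) β)
        + (∑ β, (B (n+1) α β - B' (n+1) α β) • P (n+1) β)
        + (∑ β, (Cm n α β - C' n α β) • P n β) = 0 := by
      simp only [sub_smul, Finset.sum_sub_distrib]
      have h := (hs n α).symm.trans (hs' n α)
      linear_combination h
    obtain ⟨ha, hb, hc⟩ := three_layers_zero L hL P hdeg hspan horth _ _ _ heq
    exact ⟨fun β => sub_eq_zero.mp (ha β), fun β => sub_eq_zero.mp (hb β),
      fun β => sub_eq_zero.mp (hc β)⟩
  refine ⟨funext fun n => ?_, funext fun n => ?_, funext fun n => ?_⟩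
  · cases n with
    | zero => exact Matrix.ext fun α β => (key0 α).1 β
    | succ m => exact Matrix.ext fun α β => (keyS m α).1 β
  · cases n with
    | zero => exact Matrix.ext fun α β => (key0 α).2 β
    | succ m => exact Matrix.ext fun α β => (keyS m α).2.1 β
  · exact Matrix.ext fun α β => (keyS n α).2.2 β

end Ident

def AmatAux (ab : Idx d 0 → (Idx d 1 → ℝ) × (Idx d 0 → ℝ))
    (abc : ∀ n : ℕ, Idx d (n+1) → (Idx d (n+2) → ℝ) × (Idx d (n+1) → ℝ) × (Idx d n → ℝ)) :
    ∀ n : ℕ, Matrix (Idx d n) (Idx d (n+1)) ℝ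
  | 0 => Matrix.of fun α β => (ab α).1 β
  | m+1 => Matrix.of fun α β => (abc m α).1 β

def BmatAux (ab : Idx d 0 → (Idx d 1 → ℝ) × (Idx d 0 → ℝ))
    (abc : ∀ n : ℕ, Idx d (n+1) → (Idx d (n+2) → ℝ) × (Idx d (n+1) → ℝ) × (Idx d n → ℝ)) :
    ∀ n : ℕ, Matrix (Idx d n) (Idx d n) ℝ
  | 0 => Matrix.of fun α β => (ab α).2 β
  | m+1 => Matrix.of fun α β => (abc m α).2.1 β

def CmatAux (abc : ∀ n : ℕ, Idx d (n+1) → (Idx d (n+2) → ℝ) × (Idx d (n+1) → ℝ) × (Idx d n → ℝ)) :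
    ∀ n : ℕ, Matrix (Idx d (n+1)) (Idx d n) ℝ :=
  fun n => Matrix.of fun α β => (abc n α).2.2 β


set_option maxHeartbeats 2000000 in
/-- Three-term relation: existence and uniqueness of the coefficient matrices
`A_{n,i}, B_{n,i}, C_{n,i}` with `x_i ℙ_n = A_{n,i} ℙ_{n+1} + B_{n,i} ℙ_n + C_{n,i} ℙ_{n-1}`
(`ℙ_{-1} := 0`), together with the identities `A_{n,i} H_{n+1} = L(x_i ℙ_n ℙ_{n+1}ᵀ)`,
`B_{n,i} H_n = L(x_i ℙ_n ℙ_nᵀ)` and `A_{n,i} H_{n+1} = H_n C_{n+1,i}ᵀ`.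
Here `C` is indexed so that `C n i` is the matrix `C_{n+1,i}`. -/
theorem three_term_relation_exists_unique
    (L : MPoly d →ₗ[ℝ] ℝ)
    (hL : ∀ p : MPoly d, p ≠ 0 → 0 < L (p * p))
    (P : ∀ n, Idx d n → MPoly d)
    (hdeg : ∀ n (α : Idx d n), (P n α).totalDegree = n)
    (hspan : SpansPi P)
    (horth : ∀ n (α : Idx d n) (R : MPoly d), IsDegLt R n → L (P n α * R) = 0)
    (i : Fin d) :
    (∃! ABC : (∀ n : ℕ, Matrix (Idx d n) (Idx d (n+1)) ℝ) ×
              (∀ n : ℕ, Matrix (Idx d n) (Idx d n) ℝ) ×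
              (∀ n : ℕ, Matrix (Idx d (n+1)) (Idx d n) ℝ),
      (∀ α : Idx d 0, X i * P 0 α =
        (∑ β : Idx d 1, ABC.1 0 α β • P 1 β) + ∑ β : Idx d 0, ABC.2.1 0 α β • P 0 β) ∧
      (∀ n : ℕ, ∀ α : Idx d (n+1), X i * P (n+1) α =
        (∑ β : Idx d (n+2), ABC.1 (n+1) α β • P (n+2) β) +
        (∑ β : Idx d (n+1), ABC.2.1 (n+1) α β • P (n+1) β) +
        ∑ β : Idx d n, ABC.2.2 n α β • P n β)) ∧
    (∀ (A : ∀ n : ℕ, Matrix (Idx d n) (Idx d (n+1)) ℝ)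
       (B : ∀ n : ℕ, Matrix (Idx d n) (Idx d n) ℝ)
       (Cm : ∀ n : ℕ, Matrix (Idx d (n+1)) (Idx d n) ℝ),
      ((∀ α : Idx d 0, X i * P 0 α =
          (∑ β : Idx d 1, A 0 α β • P 1 β) + ∑ β : Idx d 0, B 0 α β • P 0 β) ∧
       (∀ n : ℕ, ∀ α : Idx d (n+1), X i * P (n+1) α =
          (∑ β : Idx d (n+2), A (n+1) α β • P (n+2) β) +
          (∑ β : Idx d (n+1), B (n+1) α β • P (n+1) β) +
          ∑ β : Idx d n, Cm n α β • P n β)) →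
      ∀ n : ℕ,
        A n * Hmat L P (n+1) =
          Matrix.of (fun (α : Idx d n) (β : Idx d (n+1)) => L (X i * P n α * P (n+1) β)) ∧
        B n * Hmat L P n =
          Matrix.of (fun (α β : Idx d n) => L (X i * P n α * P n β)) ∧
        A n * Hmat L P (n+1) = Hmat L P n * (Cm n)ᵀ) := by
  constructor
  · -- existence and uniqueness of the coefficient matrices
    choose ab hab using exists_base L hL P hdeg hspan horth i
    choose abc habc using exists_step L hL P hdeg hspan horth i
    have hb' : ∀ α : Idx d 0, X i * P 0 α =
        (∑ β, AmatAux ab abc 0 α β • P 1 β) + ∑ β, BmatAux ab abc 0 α β • P 0 β := by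
      intro α
      simpa only [AmatAux, BmatAux, Matrix.of_apply] using hab α
    have hs' : ∀ n, ∀ α : Idx d (n+1), X i * P (n+1) α =
        (∑ β, AmatAux ab abc (n+1) α β • P (n+2) β) +
        (∑ β, BmatAux ab abc (n+1) α β • P (n+1) β) +
        ∑ β, CmatAux abc n α β • P n β := by
      intro n α
      simpa only [AmatAux, BmatAux, CmatAux, Matrix.of_apply] using habc n α
    refine ⟨⟨AmatAux ab abc, BmatAux ab abc, CmatAux abc⟩, ⟨hb', hs'⟩, ?_⟩
    rintro ⟨A', B', C'⟩ ⟨h0', hs2⟩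
    obtain ⟨e1, e2, e3⟩ := uniq L P hL hdeg hspan horth i A' _ B' _ C' _ h0' hs2 hb' hs'
    exact Prod.ext e1 (Prod.ext e2 e3)
  · rintro A B Cm ⟨h0', hs'⟩ n
    exact identities L P hdeg horth i A B Cm h0' hs' n
end
end

section
/- Let L be a positive definite moment functional on real polynomials in d variables and let {ℙ_n} be an orthonormal family: each P_α^n has degree n, the family spans Π_n^d degree-wise, and L(P_α^n P_β^m) = δ_{n,m} δ_{α,β}. Then for every n ∈ ℕ and 1 ≤ i ≤ d, x_i ℙ_n(x) = A_{n,i} ℙ_{n+1}(x) + B_{n,i} ℙ_n(x) + A_{n−1,i}ᵀ ℙ_{n−1}(x), where A_{n,i} = L(x_i ℙ_n ℙ_{n+1}ᵀ), B_{n,i} = L(x_i ℙ_n ℙ_nᵀ), ℙ_{−1} := 0 and A_{−1,i} := 0; moreover each B_{n,i} is a symmetric matrix. -/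
open MvPolynomial Matrix MeasureTheory

noncomputable section

variable {d : ℕ}

/-- The matrix `A_{n,i} = L(x_i ℙ_n ℙ_{n+1}ᵀ)`. -/
def Amat (L : MPoly d →ₗ[ℝ] ℝ) (P : ∀ n, Idx d n → MPoly d) (n : ℕ) (i : Fin d) :
    Matrix (Idx d n) (Idx d (n+1)) ℝ :=
  Matrix.of fun α β => L (X i * P n α * P (n+1) β)

/-- The matrix `B_{n,i} = L(x_i ℙ_n ℙ_nᵀ)`. -/
def Bmat (L : MPoly d →ₗ[ℝ] ℝ) (P : ∀ n, Idx d n → MPoly d) (n : ℕ) (i : Fin d) :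
    Matrix (Idx d n) (Idx d n) ℝ :=
  Matrix.of fun α β => L (X i * P n α * P n β)

lemma add_rot3 {M : Type*} [AddCommMonoid M] (a b c : M) : a + b + c = c + b + a := by
  abel

lemma expand_aux (L : MPoly d →ₗ[ℝ] ℝ) (P : ∀ n, Idx d n → MPoly d)
    (hspan : SpansPi P)
    (hon : ∀ n (α β : Idx d n), L (P n α * P n β) = if α = β then 1 else 0)
    (hoff : ∀ n m : ℕ, n ≠ m → ∀ (α : Idx d n) (β : Idx d m), L (P n α * P m β) = 0)
    (N : ℕ) (q : MPoly d) (hq : q.totalDegree ≤ N) :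
    q = ∑ m ∈ Finset.range (N+1), ∑ β : Idx d m, L (q * P m β) • P m β := by
  set f : (Σ m : Fin (N+1), Idx d m) → MPoly d := fun t => P t.1 t.2 with hf
  have hset : {p | ∃ m, m ≤ N ∧ ∃ α : Idx d m, p = P m α} = Set.range f := by
    ext p
    constructor
    · rintro ⟨m, hm, α, rfl⟩
      exact ⟨⟨⟨m, Nat.lt_succ_of_le hm⟩, α⟩, rfl⟩
    · rintro ⟨⟨m, α⟩, rfl⟩
      exact ⟨m, Nat.lt_succ_iff.mp m.2, α, rfl⟩
  have hq' : q ∈ Submodule.span ℝ (Set.range f) := by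
    rw [← hset, hspan N, MvPolynomial.mem_restrictTotalDegree]
    exact hq
  obtain ⟨c, hc⟩ := (Submodule.mem_span_range_iff_exists_fun ℝ).mp hq'
  have hcoef : ∀ t : Σ m : Fin (N+1), Idx d m, L (q * f t) = c t := by
    rintro ⟨m', β⟩
    rw [← hc, Finset.sum_mul, map_sum]
    have : ∀ t : Σ m : Fin (N+1), Idx d m,
        L (c t • f t * f ⟨m', β⟩) = if t = ⟨m', β⟩ then c t else 0 := by
      rintro ⟨m, α⟩
      rw [smul_mul_assoc, L.map_smul]
      by_cases h : m = m'
      · subst h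
        rw [hf]
        simp only [smul_eq_mul]
        rw [hon]
        by_cases h2 : α = β
        · subst h2; simp
        · simp [h2, Sigma.mk.inj_iff]
      · have : (m : ℕ) ≠ (m' : ℕ) := fun he => h (Fin.ext he)
        rw [hf]
        simp only [smul_eq_mul]
        rw [hoff _ _ this]
        simp [Sigma.mk.inj_iff, h]
    rw [Finset.sum_congr rfl fun t _ => this t, Finset.sum_ite_eq' Finset.univ]
    simp
  calc q = ∑ t : Σ m : Fin (N+1), Idx d m, c t • f t := hc.symm
    _ = ∑ t : Σ m : Fin (N+1), Idx d m, L (q * f t) • f t := by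
        exact Finset.sum_congr rfl fun t _ => by rw [hcoef t]
    _ = ∑ m : Fin (N+1), ∑ β : Idx d m, L (q * P m β) • P m β := by
        rw [← Finset.univ_sigma_univ, Finset.sum_sigma]
    _ = ∑ m ∈ Finset.range (N+1), ∑ β : Idx d m, L (q * P m β) • P m β := by
        rw [Fin.sum_univ_eq_sum_range (fun m => ∑ β : Idx d m, L (q * P m β) • P m β)]

lemma vanish_aux (L : MPoly d →ₗ[ℝ] ℝ) (P : ∀ n, Idx d n → MPoly d)
    (hspan : SpansPi P)
    (hon : ∀ n (α β : Idx d n), L (P n α * P n β) = if α = β then 1 else 0)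
    (hoff : ∀ n m : ℕ, n ≠ m → ∀ (α : Idx d n) (β : Idx d m), L (P n α * P m β) = 0)
    (n N : ℕ) (hN : N < n) (q : MPoly d) (hq : q.totalDegree ≤ N) (α : Idx d n) :
    L (P n α * q) = 0 := by
  rw [expand_aux L P hspan hon hoff N q hq]
  rw [Finset.mul_sum, map_sum]
  refine Finset.sum_eq_zero fun m hm => ?_
  rw [Finset.mul_sum, map_sum]
  refine Finset.sum_eq_zero fun β _ => ?_
  have hmn : n ≠ m := by have := Finset.mem_range.mp hm; omega
  rw [mul_smul_comm, L.map_smul, hoff n m hmn α β, smul_zero]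


/-- For an orthonormal family the three-term relation takes the form
`x_i ℙ_n = A_{n,i} ℙ_{n+1} + B_{n,i} ℙ_n + A_{n-1,i}ᵀ ℙ_{n-1}` (`ℙ_{-1} := 0`, `A_{-1,i} := 0`)
with `A_{n,i} = L(x_i ℙ_n ℙ_{n+1}ᵀ)`, `B_{n,i} = L(x_i ℙ_n ℙ_nᵀ)`, `B_{n,i}` symmetric. -/
theorem orthonormal_three_term_relation
    (L : MPoly d →ₗ[ℝ] ℝ)
    (hL : ∀ p : MPoly d, p ≠ 0 → 0 < L (p * p))
    (P : ∀ n, Idx d n → MPoly d)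
    (hdeg : ∀ n (α : Idx d n), (P n α).totalDegree = n)
    (hspan : SpansPi P)
    (hon : ∀ n (α β : Idx d n), L (P n α * P n β) = if α = β then 1 else 0)
    (hoff : ∀ n m : ℕ, n ≠ m → ∀ (α : Idx d n) (β : Idx d m), L (P n α * P m β) = 0) :
    (∀ (i : Fin d) (α : Idx d 0), X i * P 0 α =
      (∑ β : Idx d 1, Amat L P 0 i α β • P 1 β) +
      ∑ β : Idx d 0, Bmat L P 0 i α β • P 0 β) ∧
    (∀ (n : ℕ) (i : Fin d) (α : Idx d (n+1)), X i * P (n+1) α =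
      (∑ β : Idx d (n+2), Amat L P (n+1) i α β • P (n+2) β) +
      (∑ β : Idx d (n+1), Bmat L P (n+1) i α β • P (n+1) β) +
      ∑ β : Idx d n, (Amat L P n i)ᵀ α β • P n β) ∧
    (∀ (n : ℕ) (i : Fin d), (Bmat L P n i).IsSymm) := by
  have hsym : ∀ (n : ℕ) (i : Fin d), (Bmat L P n i).IsSymm := by
    intro n i
    ext α β
    simp only [Bmat, Matrix.transpose_apply, Matrix.of_apply]
    congr 1
    ring
  refine ⟨?_, ?_, hsym⟩
  · intro i α
    have hdq : (X i * P 0 α).totalDegree ≤ 1 :=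
      (totalDegree_mul _ _).trans (by rw [totalDegree_X, hdeg])
    have key := expand_aux L P hspan hon hoff 1 (X i * P 0 α) hdq
    have hA : ∑ β : Idx d 1, Amat L P 0 i α β • P 1 β
        = ∑ β : Idx d 1, L (X i * P 0 α * P 1 β) • P 1 β := rfl
    have hB : ∑ β : Idx d 0, Bmat L P 0 i α β • P 0 β
        = ∑ β : Idx d 0, L (X i * P 0 α * P 0 β) • P 0 β := rfl
    rw [key, Finset.sum_range_succ, Finset.sum_range_one, hA, hB, add_comm]
  · intro n i α
    have hdq : (X i * P (n+1) α).totalDegree ≤ n + 2 :=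
      (totalDegree_mul _ _).trans (by rw [totalDegree_X, hdeg]; omega)
    have key := expand_aux L P hspan hon hoff (n+2) (X i * P (n+1) α) hdq
    rw [Finset.sum_range_succ, Finset.sum_range_succ, Finset.sum_range_succ] at key
    have hz : ∑ m ∈ Finset.range n, ∑ β : Idx d m,
        L (X i * P (n+1) α * P m β) • P m β = 0 := by
      refine Finset.sum_eq_zero fun m hm => Finset.sum_eq_zero fun β _ => ?_
      have hm' := Finset.mem_range.mp hm
      have h1 : L (X i * P (n+1) α * P m β) = L (P (n+1) α * (X i * P m β)) := by
        congr 1; ring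
      have h2 : (X i * P m β).totalDegree ≤ m + 1 := by
        refine (totalDegree_mul _ _).trans ?_
        rw [totalDegree_X, hdeg]; omega
      rw [h1, vanish_aux L P hspan hon hoff (n+1) (m+1) (by omega) _ h2 α, zero_smul]
    rw [hz, zero_add] at key
    have hT : ∑ β : Idx d n, (Amat L P n i)ᵀ α β • P n β
        = ∑ β : Idx d n, L (X i * P (n+1) α * P n β) • P n β := by
      refine Finset.sum_congr rfl fun β _ => ?_
      congr 1
      show L (X i * P n β * P (n+1) α) = _
      congr 1
      ring
    have hA : ∑ β : Idx d (n+2), Amat L P (n+1) i α β • P (n+2) β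
        = ∑ β : Idx d (n+2), L (X i * P (n+1) α * P (n+2) β) • P (n+2) β := rfl
    have hB : ∑ β : Idx d (n+1), Bmat L P (n+1) i α β • P (n+1) β
        = ∑ β : Idx d (n+1), L (X i * P (n+1) α * P (n+1) β) • P (n+1) β := rfl
    conv_lhs => rw [key]
    rw [hA, hB, hT]
    apply add_rot3
end
end

section
/- Let {ℙ_n}_{n=0}^∞ = {P_α^n : |α| = n, n ∈ ℕ}, with ℙ_0 = 1, be an arbitrary sequence of real polynomials in d variables such that {P_α^m : |α| ≤ m ≤ n} spans Π_n^d for each n, and set ℙ_{−1} := 0. Then the following are equivalent: (1) there exists a positive definite linear functional L : Π^d → ℝ such that L(P_α^n P_β^m) = δ_{n,m} δ_{α,β} for all indices; (2) for every n ≥ 0 and 1 ≤ i ≤ d there exist matrices A_{n,i} of size r_n^d × r_{n+1}^d and symmetric matrices B_{n,i} of size r_n^d × r_n^d such that (i) x_i ℙ_n(x) = A_{n,i} ℙ_{n+1}(x) + B_{n,i} ℙ_n(x) + A_{n−1,i}ᵀ ℙ_{n−1}(x) for 1 ≤ i ≤ d (with A_{−1,i} := 0), and (ii) rank A_{n,i}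 = r_n^d for each i, and the stacked matrix A_n = (A_{n,1}ᵀ, …, A_{n,d}ᵀ)ᵀ has rank r_{n+1}^d. -/
open MvPolynomial Matrix MeasureTheory

noncomputable section

variable {d : ℕ}

namespace Favard

variable (P : ∀ n, Idx d n → MPoly d)

/-- The family re-indexed by plain multi-indices. -/
def Q (γ : Fin d → ℕ) : MPoly d := P (∑ i, γ i) ⟨γ, rfl⟩

theorem Q_eq {γ : Fin d → ℕ} {m : ℕ} (h : ∑ i, γ i = m) : Q P γ = P m ⟨γ, h⟩ := by
  subst h; rfl

theorem P_eq_Q (n : ℕ) (α : Idx d n) : P n α = Q P α.1 := by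
  obtain ⟨a, ha⟩ := α; exact (Q_eq P ha).symm

theorem P_mem (hspan : SpansPi P) (n : ℕ) (α : Idx d n) : P n α ∈ restrictTotalDegree (Fin d) ℝ n := by
  rw [← hspan n]
  exact Submodule.subset_span ⟨n, le_rfl, α, rfl⟩

theorem P_totalDegree_le (hspan : SpansPi P) (n : ℕ) (α : Idx d n) : (P n α).totalDegree ≤ n :=
  (mem_restrictTotalDegree _ _ _).mp (P_mem P hspan n α)

theorem Q_mem (hspan : SpansPi P) (γ : Fin d → ℕ) {N : ℕ} (h : ∑ i, γ i ≤ N) :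
    Q P γ ∈ restrictTotalDegree (Fin d) ℝ N := by
  rw [← hspan N]
  exact Submodule.subset_span ⟨∑ i, γ i, h, ⟨γ, rfl⟩, rfl⟩

theorem genset_eq (N : ℕ) :
    {p | ∃ m, m ≤ N ∧ ∃ α : Idx d m, p = P m α} = Q P '' {γ | ∑ i, γ i ≤ N} := by
  ext p
  constructor
  · rintro ⟨m, hm, ⟨γ, hγ⟩, rfl⟩
    exact ⟨γ, by simpa [hγ] using hm, Q_eq P hγ⟩
  · rintro ⟨γ, hγ, rfl⟩
    exact ⟨∑ i, γ i, hγ, ⟨γ, rfl⟩, rfl⟩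

theorem finsupp_sum_eq (s : Fin d →₀ ℕ) : (s.sum fun _ e => e) = ∑ i, s i :=
  Finsupp.sum_fintype _ _ fun _ => rfl

def idxLeEquiv (d N : ℕ) : {s : Fin d →₀ ℕ // (s.sum fun _ e => e) ≤ N} ≃ IdxLe d N where
  toFun s := ⟨⇑s.1, by rw [← finsupp_sum_eq]; exact s.2⟩
  invFun a := ⟨Finsupp.equivFunOnFinite.symm a.1, by
    rw [finsupp_sum_eq]
    simpa using a.2⟩
  left_inv s := Subtype.ext (Finsupp.equivFunOnFinite.symm_apply_apply s.1)
  right_inv a := Subtype.ext rfl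

theorem finrank_restrict (N : ℕ) :
    Module.finrank ℝ (restrictTotalDegree (Fin d) ℝ N) = Fintype.card (IdxLe d N) := by
  classical
  exact Module.finrank_eq_card_basis
    ((basisRestrictSupport ℝ _).reindex (idxLeEquiv d N))

def uu (hspan : SpansPi P) (N : ℕ) (β : IdxLe d N) : restrictTotalDegree (Fin d) ℝ N :=
  ⟨Q P β.1, Q_mem P hspan β.1 β.2⟩

theorem uu_span (hspan : SpansPi P) (N : ℕ) :
    ⊤ ≤ Submodule.span ℝ (Set.range (uu P hspan N)) := by
  have hmap : Submodule.map (restrictTotalDegree (Fin d) ℝ N).subtype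
      (Submodule.span ℝ (Set.range (uu P hspan N))) =
      Submodule.span ℝ (Q P '' {γ | ∑ i, γ i ≤ N}) := by
    rw [Submodule.map_span]
    congr 1
    ext q
    constructor
    · rintro ⟨_, ⟨β, rfl⟩, rfl⟩
      exact ⟨β.1, β.2, rfl⟩
    · rintro ⟨γ, hγ, rfl⟩
      exact ⟨_, ⟨⟨γ, hγ⟩, rfl⟩, rfl⟩
  intro x _
  have hx : (x : MPoly d) ∈ Submodule.map (restrictTotalDegree (Fin d) ℝ N).subtype
      (Submodule.span ℝ (Set.range (uu P hspan N))) := by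
    rw [hmap, ← genset_eq, hspan N]
    exact x.2
  obtain ⟨y, hy, hyx⟩ := hx
  rwa [show y = x from Subtype.ext hyx] at hy

def bLe (hspan : SpansPi P) (N : ℕ) :
    Module.Basis (IdxLe d N) ℝ (restrictTotalDegree (Fin d) ℝ N) :=
  basisOfTopLeSpanOfCardEqFinrank (uu P hspan N) (uu_span P hspan N)
    (finrank_restrict N).symm

theorem uu_li (hspan : SpansPi P) (N : ℕ) :
    LinearIndependent ℝ (fun β : IdxLe d N => Q P β.1) := by
  have h := (bLe P hspan N).linearIndependent
  rw [show ⇑(bLe P hspan N) = uu P hspan N from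
    coe_basisOfTopLeSpanOfCardEqFinrank _ _ _] at h
  exact h.map' (restrictTotalDegree (Fin d) ℝ N).subtype (Submodule.ker_subtype _)

theorem Q_li (hspan : SpansPi P) : LinearIndependent ℝ (Q P) := by
  rw [linearIndependent_iff']
  intro s g hg α hα
  classical
  set N := s.sup (fun γ => ∑ i, γ i) with hN
  have hsub : ∀ γ ∈ s, ∑ i, γ i ≤ N := fun γ hγ => Finset.le_sup hγ
  have key := linearIndependent_iff'.mp (uu_li P hspan N)
  refine key (s.subtype _) (fun β => g β.1) ?_ ⟨α, hsub α hα⟩ (Finset.mem_subtype.mpr hα)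
  rw [Finset.sum_subtype_eq_sum_filter (fun γ => g γ • Q P γ), Finset.filter_true_of_mem hsub]
  exact hg

theorem Q_span (hspan : SpansPi P) : ⊤ ≤ Submodule.span ℝ (Set.range (Q P)) := by
  intro p _
  have hp : p ∈ restrictTotalDegree (Fin d) ℝ p.totalDegree :=
    (mem_restrictTotalDegree _ _ _).mpr le_rfl
  rw [← hspan p.totalDegree, genset_eq] at hp
  exact Submodule.span_mono (Set.image_subset_range _ _) hp

def bQ (hspan : SpansPi P) : Module.Basis (Fin d → ℕ) ℝ (MPoly d) :=
  Module.Basis.mk (Q_li P hspan) (Q_span P hspan)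

theorem bQ_coe (hspan : SpansPi P) : ⇑(bQ P hspan) = Q P := Module.Basis.coe_mk _ _

theorem bQ_image (hspan : SpansPi P) (s : Set (Fin d → ℕ)) :
    bQ P hspan '' s = Q P '' s := by rw [bQ_coe]

theorem repr_support_le (hspan : SpansPi P) {p : MPoly d} {N : ℕ}
    (hp : p.totalDegree ≤ N) :
    ∀ γ ∈ ((bQ P hspan).repr p).support, ∑ i, γ i ≤ N := by
  intro γ hγ
  have hmem : p ∈ Submodule.span ℝ (bQ P hspan '' {γ | ∑ i, γ i ≤ N}) := by
    rw [bQ_image, ← genset_eq, hspan N]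
    exact (mem_restrictTotalDegree _ _ _).mpr hp
  exact (Module.Basis.mem_span_image _).mp hmem hγ

theorem totalDegree_le_of_repr (hspan : SpansPi P) {p : MPoly d} {N : ℕ}
    (h : ∀ γ ∈ ((bQ P hspan).repr p).support, ∑ i, γ i ≤ N) :
    p.totalDegree ≤ N := by
  rw [← mem_restrictTotalDegree (R := ℝ), ← hspan N, genset_eq, ← bQ_image P hspan]
  exact (Module.Basis.mem_span_image _).mpr h

theorem sum_mul_ite {k : ℕ} (c : Idx d k → ℝ) (γ : Fin d → ℕ) [Decidable (∑ i, γ i = k)] :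
    (∑ β : Idx d k, c β * (if β.1 = γ then 1 else 0)) =
      if h : ∑ i, γ i = k then c ⟨γ, h⟩ else 0 := by
  split_ifs with h
  · rw [Finset.sum_eq_single (⟨γ, h⟩ : Idx d k)]
    · simp
    · intro b _ hb
      have : b.1 ≠ γ := fun e => hb (Subtype.ext e)
      simp [this]
    · intro hb; exact absurd (Finset.mem_univ _) hb
  · apply Finset.sum_eq_zero
    intro β _
    have : β.1 ≠ γ := fun e => h (e ▸ β.2)
    simp [this]

theorem repr_sum_P (hspan : SpansPi P) {k : ℕ} (c : Idx d k → ℝ) (γ : Fin d → ℕ)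
    [Decidable (∑ i, γ i = k)] :
    (bQ P hspan).repr (∑ β : Idx d k, c β • P k β) γ =
      if h : ∑ i, γ i = k then c ⟨γ, h⟩ else 0 := by
  rw [map_sum, Finsupp.finset_sum_apply, ← sum_mul_ite c γ]
  apply Finset.sum_congr rfl
  intro β _
  rw [_root_.map_smul, P_eq_Q P k β, ← bQ_coe P hspan, Module.Basis.repr_self, Finsupp.smul_apply,
    Finsupp.single_apply, smul_eq_mul]

/-- Orthogonality to lower degree. -/
theorem L_P_low (hspan : SpansPi P) (L : MPoly d →ₗ[ℝ] ℝ)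
    (hoff : ∀ n m : ℕ, n ≠ m → ∀ (α : Idx d n) (β : Idx d m), L (P n α * P m β) = 0)
    {n m : ℕ} (h : m < n) (α : Idx d n) {q : MPoly d}
    (hq : q ∈ restrictTotalDegree (Fin d) ℝ m) : L (P n α * q) = 0 := by
  rw [← hspan m] at hq
  induction hq using Submodule.span_induction with
  | mem x hx =>
    obtain ⟨k, hk, β, rfl⟩ := hx
    exact hoff n k (by omega) α β
  | zero => simp
  | add x y _ _ hx hy => rw [mul_add, map_add, hx, hy, add_zero]
  | smul c x _ hx => rw [mul_smul_comm, _root_.map_smul, hx, smul_zero]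

/-- Orthonormality of the `Q` family. -/
theorem L_Q_Q (L : MPoly d →ₗ[ℝ] ℝ)
    (hon : ∀ n (α β : Idx d n), L (P n α * P n β) = if α = β then 1 else 0)
    (hoff : ∀ n m : ℕ, n ≠ m → ∀ (α : Idx d n) (β : Idx d m), L (P n α * P m β) = 0)
    (γ δ : Fin d → ℕ) :
    L (Q P γ * Q P δ) = if γ = δ then 1 else 0 := by
  classical
  by_cases h : ∑ i, δ i = ∑ i, γ i
  · rw [Q_eq P (γ := δ) h, Q]
    rw [hon]
    by_cases hg : γ = δ
    · subst hg; simp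
    · rw [if_neg hg, if_neg (fun e => hg (congrArg Subtype.val e))]
  · rw [if_neg (fun e : γ = δ => h (e ▸ rfl)), Q, Q, hoff _ _ (fun e => h e.symm)]

theorem repr_eq_L (hspan : SpansPi P) (L : MPoly d →ₗ[ℝ] ℝ)
    (hon : ∀ n (α β : Idx d n), L (P n α * P n β) = if α = β then 1 else 0)
    (hoff : ∀ n m : ℕ, n ≠ m → ∀ (α : Idx d n) (β : Idx d m), L (P n α * P m β) = 0)
    (p : MPoly d) (γ : Fin d → ℕ) :
    (bQ P hspan).repr p γ = L (p * Q P γ) := by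
  classical
  have key : (Finsupp.lapply γ).comp ((bQ P hspan).repr : MPoly d →ₗ[ℝ] _) =
      L.comp (LinearMap.mulRight ℝ (Q P γ)) := by
    apply Module.Basis.ext (bQ P hspan)
    intro δ
    have h1 : (bQ P hspan).repr (bQ P hspan δ) = Finsupp.single δ 1 :=
      Module.Basis.repr_self _ _
    simp only [LinearMap.coe_comp, Function.comp_apply, LinearEquiv.coe_coe, h1,
      Finsupp.lapply_apply, LinearMap.mulRight_apply]
    rw [Finsupp.single_apply, bQ_coe, L_Q_Q P L hon hoff]
  exact DFunLike.congr_fun key p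

section Forward

theorem L_X_P_Q (hspan : SpansPi P) (L : MPoly d →ₗ[ℝ] ℝ)
    (hoff : ∀ n m : ℕ, n ≠ m → ∀ (α : Idx d n) (β : Idx d m), L (P n α * P m β) = 0)
    {n : ℕ} (i : Fin d) (α : Idx d n) (γ : Fin d → ℕ)
    (hlt : ∑ j, γ j + 1 < n ∨ n + 1 < ∑ j, γ j) :
    L ((X i * P n α) * Q P γ) = 0 := by
  rcases hlt with h | h
  · rw [show (X i * P n α) * Q P γ = P n α * (X i * Q P γ) by ring]
    refine L_P_low P hspan L hoff (m := ∑ j, γ j + 1) (by omega) α ?_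
    rw [mem_restrictTotalDegree]
    refine le_trans (totalDegree_mul _ _) ?_
    have h1 : (Q P γ).totalDegree ≤ ∑ j, γ j :=
      P_totalDegree_le P hspan (∑ j, γ j) ⟨γ, rfl⟩
    have h2 : (X i : MPoly d).totalDegree = 1 := totalDegree_X i
    omega
  · rw [show (X i * P n α) * Q P γ = Q P γ * (X i * P n α) by ring, Q]
    refine L_P_low P hspan L hoff (m := n + 1) h ⟨γ, rfl⟩ ?_
    rw [mem_restrictTotalDegree]
    refine le_trans (totalDegree_mul _ _) ?_
    have h1 : (P n α).totalDegree ≤ n := P_totalDegree_le P hspan n α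
    have h2 : (X i : MPoly d).totalDegree = 1 := totalDegree_X i
    omega

theorem X_mul_P_totalDegree (hspan : SpansPi P) {n : ℕ} (i : Fin d) (α : Idx d n) :
    (X i * P n α).totalDegree ≤ n + 1 := by
  refine le_trans (totalDegree_mul _ _) ?_
  have h1 : (P n α).totalDegree ≤ n := P_totalDegree_le P hspan n α
  have h2 : (X i : MPoly d).totalDegree = 1 := totalDegree_X i
  omega

theorem forward_A_li (hspan : SpansPi P) (L : MPoly d →ₗ[ℝ] ℝ)
    (hpos : ∀ p : MPoly d, p ≠ 0 → 0 < L (p * p))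
    (hon : ∀ n (α β : Idx d n), L (P n α * P n β) = if α = β then 1 else 0)
    (hoff : ∀ n m : ℕ, n ≠ m → ∀ (α : Idx d n) (β : Idx d m), L (P n α * P m β) = 0)
    (n : ℕ) (i : Fin d) :
    LinearIndependent ℝ
      (Matrix.of fun (α : Idx d n) (β : Idx d (n+1)) => L (X i * P n α * P (n+1) β)) := by
  classical
  refine Fintype.linearIndependent_iff.mpr ?_
  intro g hg
  set p : MPoly d := ∑ α : Idx d n, g α • P n α with hp
  have hXp : ∀ β : Idx d (n+1), L ((X i * p) * P (n+1) β) = 0 := by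
    intro β
    have h1 : (X i * p) * P (n+1) β
        = ∑ α : Idx d n, g α • (X i * P n α * P (n+1) β) := by
      rw [hp, Finset.mul_sum, Finset.sum_mul]
      refine Finset.sum_congr rfl fun α _ => ?_
      rw [mul_smul_comm, smul_mul_assoc, mul_assoc]
    rw [h1, map_sum]
    have h2 := congrFun hg β
    rw [Finset.sum_apply] at h2
    simpa using h2
  have hp0 : p = 0 := by
    by_contra hpne
    have hpmem : p ∈ restrictTotalDegree (Fin d) ℝ n :=
      Submodule.sum_mem _ fun α _ => Submodule.smul_mem _ _ (P_mem P hspan n α)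
    have hpdeg : p.totalDegree ≤ n := (mem_restrictTotalDegree _ _ _).mp hpmem
    have hXpdeg : (X i * p).totalDegree ≤ n := by
      apply totalDegree_le_of_repr P hspan
      intro γ hγ
      have h1 : ∑ j, γ j ≤ n + 1 := by
        refine repr_support_le P hspan ?_ γ hγ
        refine le_trans (totalDegree_mul _ _) ?_
        have h2 : (X i : MPoly d).totalDegree = 1 := totalDegree_X i
        omega
      by_contra hgt
      have h2 : ∑ j, γ j = n + 1 := by omega
      have h3 : (bQ P hspan).repr (X i * p) γ = 0 := by
        rw [repr_eq_L P hspan L hon hoff, Q_eq P h2]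
        exact hXp ⟨γ, h2⟩
      exact Finsupp.mem_support_iff.mp hγ h3
    have hplt : p.totalDegree + 1 ≤ n := by
      obtain ⟨κ, hκmem, hκ⟩ := Finset.exists_mem_eq_sup p.support
        (by
          rw [Finset.nonempty_iff_ne_empty]
          intro he
          exact hpne (MvPolynomial.support_eq_empty.mp he))
        (fun s => s.sum fun _ e => e)
      have hc : coeff (Finsupp.single i 1 + κ) (X i * p) ≠ 0 := by
        rw [coeff_X_mul]
        exact MvPolynomial.mem_support_iff.mp hκmem
      have h3 := le_totalDegree (MvPolynomial.mem_support_iff.mpr hc)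
      have h4 : ((Finsupp.single i 1 + κ).sum fun _ e => e)
          = 1 + (κ.sum fun _ e => e) := by
        rw [Finsupp.sum_add_index' (fun _ => rfl) (fun _ _ _ => rfl),
          Finsupp.sum_single_index rfl]
      have h5 : p.totalDegree = κ.sum fun _ e => e := by
        rw [MvPolynomial.totalDegree, hκ]
      omega
    have hL0 : L (p * p) = 0 := by
      have h1 : p * p = ∑ α : Idx d n, g α • (P n α * p) := by
        rw [hp, Finset.sum_mul]
        exact Finset.sum_congr rfl fun α _ => smul_mul_assoc _ _ _
      rw [h1, map_sum]
      refine Finset.sum_eq_zero fun α _ => ?_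
      rw [_root_.map_smul, smul_eq_mul]
      have h2 : L (P n α * p) = 0 := by
        refine L_P_low P hspan L hoff (m := p.totalDegree) (by omega) α ?_
        exact (mem_restrictTotalDegree _ _ _).mpr le_rfl
      rw [h2, mul_zero]
    have := hpos p hpne
    rw [hL0] at this
    exact lt_irrefl 0 this
  intro α
  have h6 := repr_sum_P P hspan g α.1
  rw [← hp, hp0, map_zero] at h6
  rcases α with ⟨a, ha⟩
  rw [dif_pos ha, Finsupp.zero_apply] at h6
  exact h6.symm

theorem forward_stack_li (hspan : SpansPi P) (L : MPoly d →ₗ[ℝ] ℝ)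
    (hpos : ∀ p : MPoly d, p ≠ 0 → 0 < L (p * p))
    (hoff : ∀ n m : ℕ, n ≠ m → ∀ (α : Idx d n) (β : Idx d m), L (P n α * P m β) = 0)
    (hon : ∀ n (α β : Idx d n), L (P n α * P n β) = if α = β then 1 else 0)
    (n : ℕ) :
    LinearIndependent ℝ
      (Matrix.of fun (β : Idx d (n+1)) (q : Fin d × Idx d n) =>
        L (X q.1 * P n q.2 * P (n+1) β)) := by
  classical
  refine Fintype.linearIndependent_iff.mpr ?_
  intro g hg
  set q : MPoly d := ∑ β : Idx d (n+1), g β • P (n+1) β with hq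
  have hkey : ∀ (i : Fin d) (α : Idx d n), L ((X i * P n α) * q) = 0 := by
    intro i α
    have h1 : (X i * P n α) * q
        = ∑ β : Idx d (n+1), g β • (X i * P n α * P (n+1) β) := by
      rw [hq, Finset.mul_sum]
      exact Finset.sum_congr rfl fun β _ => mul_smul_comm _ _ _
    rw [h1, map_sum]
    have h2 := congrFun hg (i, α)
    rw [Finset.sum_apply] at h2
    simpa using h2
  have hlow : ∀ (m : ℕ), m ≤ n → ∀ (f : MPoly d),
      f ∈ restrictTotalDegree (Fin d) ℝ m → L (f * q) = 0 := by
    intro m hm f hf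
    have h1 : f * q = ∑ β : Idx d (n+1), g β • (P (n+1) β * f) := by
      rw [hq, Finset.mul_sum]
      refine Finset.sum_congr rfl fun β _ => ?_
      rw [mul_smul_comm, mul_comm f]
    rw [h1, map_sum]
    refine Finset.sum_eq_zero fun β _ => ?_
    rw [_root_.map_smul, smul_eq_mul,
      L_P_low P hspan L hoff (m := m) (by omega) β hf, mul_zero]
  have hq0 : q = 0 := by
    by_contra hqne
    have hmono : ∀ κ : Fin d →₀ ℕ, (κ.sum fun _ e => e) ≤ n + 1 →
        L ((monomial κ 1 : MPoly d) * q) = 0 := by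
      intro κ hκ
      rcases Nat.lt_or_ge (κ.sum fun _ e => e) (n+1) with hlt | hge
      · refine hlow (κ.sum fun _ e => e) (by omega) _ ?_
        rw [mem_restrictTotalDegree]
        exact totalDegree_monomial_le _ _
      · have hsum : (κ.sum fun _ e => e) = n + 1 := by omega
        have hex : ∃ i, κ i ≠ 0 := by
          by_contra hno
          push_neg at hno
          have hz : κ = 0 := Finsupp.ext fun j => hno j
          rw [hz] at hsum
          simp at hsum
        obtain ⟨i, hi⟩ := hex
        set κ' := κ - Finsupp.single i 1 with hκ'
        have hle : Finsupp.single i 1 ≤ κ := by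
          rw [Finsupp.single_le_iff]
          omega
        have hdecomp : Finsupp.single i 1 + κ' = κ := add_tsub_cancel_of_le hle
        have hκ'sum : (κ'.sum fun _ e => e) ≤ n := by
          have h1 : ((Finsupp.single i 1 + κ').sum fun _ e => e)
              = 1 + (κ'.sum fun _ e => e) := by
            rw [Finsupp.sum_add_index' (fun _ => rfl) (fun _ _ _ => rfl),
              Finsupp.sum_single_index rfl]
          rw [hdecomp] at h1
          omega
        have hmon : (monomial κ 1 : MPoly d) = X i * monomial κ' 1 := by
          rw [MvPolynomial.X, MvPolynomial.monomial_mul, one_mul, hdecomp]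
        have hmem : (monomial κ' 1 : MPoly d) ∈ restrictTotalDegree (Fin d) ℝ n := by
          rw [mem_restrictTotalDegree]
          exact le_trans (totalDegree_monomial_le _ _) hκ'sum
        rw [← hspan n] at hmem
        have hgen : ∀ f : MPoly d,
            f ∈ Submodule.span ℝ {p | ∃ m, m ≤ n ∧ ∃ α : Idx d m, p = P m α} →
            L (X i * f * q) = 0 := by
          intro f hf
          induction hf using Submodule.span_induction with
          | mem x hx =>
            obtain ⟨m, hm, β, rfl⟩ := hx
            rcases Nat.lt_or_ge m n with hmlt | hmge
            · refine hlow (m+1) (by omega) _ ?_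
              rw [mem_restrictTotalDegree]
              refine le_trans (totalDegree_mul _ _) ?_
              have h2 : (X i : MPoly d).totalDegree = 1 := totalDegree_X i
              have h3 : (P m β).totalDegree ≤ m := P_totalDegree_le P hspan m β
              omega
            · have hmn : m = n := le_antisymm hm hmge
              subst hmn
              exact hkey i β
          | zero => rw [mul_zero, zero_mul, map_zero]
          | add x y _ _ hx hy => rw [mul_add, add_mul, map_add, hx, hy, add_zero]
          | smul c x _ hx =>
            rw [mul_smul_comm, smul_mul_assoc, _root_.map_smul, hx, smul_zero]
        rw [hmon]
        exact hgen _ hmem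
    have hL0 : L (q * q) = 0 := by
      have hqmem : q ∈ restrictTotalDegree (Fin d) ℝ (n+1) :=
        Submodule.sum_mem _ fun β _ => Submodule.smul_mem _ _ (P_mem P hspan (n+1) β)
      have hqdeg : q.totalDegree ≤ n + 1 := (mem_restrictTotalDegree _ _ _).mp hqmem
      have hqq : q * q = ∑ κ ∈ q.support, coeff κ q • ((monomial κ 1 : MPoly d) * q) := by
        conv_lhs => rw [MvPolynomial.as_sum q]
        rw [Finset.sum_mul]
        refine Finset.sum_congr rfl fun κ hκ => ?_
        rw [← MvPolynomial.as_sum q, ← smul_mul_assoc, MvPolynomial.smul_monomial, smul_eq_mul, mul_one]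
      rw [hqq, map_sum]
      refine Finset.sum_eq_zero fun κ hκ => ?_
      rw [_root_.map_smul, smul_eq_mul,
        hmono κ (le_trans (le_totalDegree hκ) hqdeg), mul_zero]
    have := hpos q hqne
    rw [hL0] at this
    exact lt_irrefl 0 this
  intro β
  have h6 := repr_sum_P P hspan g β.1
  rw [← hq, hq0, map_zero] at h6
  rcases β with ⟨b, hb⟩
  rw [dif_pos hb, Finsupp.zero_apply] at h6
  exact h6.symm

theorem forward_rec (hspan : SpansPi P) (L : MPoly d →ₗ[ℝ] ℝ)
    (hon : ∀ n (α β : Idx d n), L (P n α * P n β) = if α = β then 1 else 0)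
    (hoff : ∀ n m : ℕ, n ≠ m → ∀ (α : Idx d n) (β : Idx d m), L (P n α * P m β) = 0)
    (n : ℕ) (i : Fin d) (α : Idx d (n+1)) :
    X i * P (n+1) α =
      (∑ β : Idx d (n+2), L (X i * P (n+1) α * P (n+2) β) • P (n+2) β) +
      (∑ β : Idx d (n+1), L (X i * P (n+1) α * P (n+1) β) • P (n+1) β) +
      ∑ β : Idx d n, L (X i * P n β * P (n+1) α) • P n β := by
  classical
  apply (bQ P hspan).repr.injective
  ext γ
  rw [map_add, map_add, Finsupp.add_apply, Finsupp.add_apply,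
    repr_sum_P P hspan (fun β => L (X i * P (n+1) α * P (n+2) β)) γ,
    repr_sum_P P hspan (fun β => L (X i * P (n+1) α * P (n+1) β)) γ,
    repr_sum_P P hspan (fun β => L (X i * P n β * P (n+1) α)) γ,
    repr_eq_L P hspan L hon hoff]
  by_cases h2 : ∑ j, γ j = n + 2
  · rw [dif_pos h2, dif_neg (by omega), dif_neg (by omega), Q_eq P h2, add_zero, add_zero]
  by_cases h1 : ∑ j, γ j = n + 1
  · rw [dif_neg h2, dif_pos h1, dif_neg (by omega), Q_eq P h1, zero_add, add_zero]
  by_cases h0 : ∑ j, γ j = n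
  · rw [dif_neg h2, dif_neg h1, dif_pos h0, Q_eq P h0, zero_add, zero_add,
      show X i * P (n+1) α * P n ⟨γ, h0⟩ = X i * P n ⟨γ, h0⟩ * P (n+1) α by ring]
  · rw [dif_neg h2, dif_neg h1, dif_neg h0, add_zero, add_zero]
    exact L_X_P_Q P hspan L hoff i α γ (by omega)

theorem forward_rec0 (hspan : SpansPi P) (L : MPoly d →ₗ[ℝ] ℝ)
    (hon : ∀ n (α β : Idx d n), L (P n α * P n β) = if α = β then 1 else 0)
    (hoff : ∀ n m : ℕ, n ≠ m → ∀ (α : Idx d n) (β : Idx d m), L (P n α * P m β) = 0)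
    (i : Fin d) (α : Idx d 0) :
    X i * P 0 α =
      (∑ β : Idx d 1, L (X i * P 0 α * P 1 β) • P 1 β) +
      ∑ β : Idx d 0, L (X i * P 0 α * P 0 β) • P 0 β := by
  classical
  apply (bQ P hspan).repr.injective
  ext γ
  rw [map_add, Finsupp.add_apply,
    repr_sum_P P hspan (fun β => L (X i * P 0 α * P 1 β)) γ,
    repr_sum_P P hspan (fun β => L (X i * P 0 α * P 0 β)) γ,
    repr_eq_L P hspan L hon hoff]
  by_cases h1 : ∑ j, γ j = 1
  · rw [dif_pos h1, dif_neg (by omega), Q_eq P h1, add_zero]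
  by_cases h0 : ∑ j, γ j = 0
  · rw [dif_neg h1, dif_pos h0, Q_eq P h0, zero_add]
  · rw [dif_neg h1, dif_neg h0, add_zero]
    exact L_X_P_Q P hspan L hoff i α γ (by omega)

end Forward

section Backward

theorem rank_mulVec_injective {m k : Type*} [Fintype m] [Fintype k] [DecidableEq k]
    (M : Matrix m k ℝ) (h : M.rank = Fintype.card k) {v : k → ℝ} (hv : M *ᵥ v = 0) :
    v = 0 := by
  have h1 := LinearMap.finrank_range_add_finrank_ker M.mulVecLin
  rw [Module.finrank_fintype_fun_eq_card] at h1
  rw [Matrix.rank] at h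
  have h2 : Module.finrank ℝ (LinearMap.ker M.mulVecLin) = 0 := by omega
  have h3 : LinearMap.ker M.mulVecLin = ⊥ := Submodule.finrank_eq_zero.mp h2
  have h4 : v ∈ LinearMap.ker M.mulVecLin := by
    rw [LinearMap.mem_ker, Matrix.mulVecLin_apply]
    exact hv
  rwa [h3, Submodule.mem_bot] at h4

theorem sum_mul_ite' {k : Type*} [Fintype k] [DecidableEq k] (c : k → ℝ) (b : k) :
    ∑ x : k, c x * (if x = b then (1:ℝ) else 0) = c b := by
  rw [Finset.sum_congr rfl (fun x _ => by rw [mul_ite, mul_one, mul_zero])]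
  simp [Finset.sum_ite_eq']

/-- The candidate linear functional: `1` on `1 = P 0` and `0` on all other `P n α`. -/
def Lb (hspan : SpansPi P) : MPoly d →ₗ[ℝ] ℝ :=
  (bQ P hspan).constr ℝ (fun γ => if γ = 0 then (1:ℝ) else 0)

theorem Lb_one (hspan : SpansPi P) (hP0 : ∀ α : Idx d 0, P 0 α = 1) : Lb P hspan 1 = 1 := by
  have h0 : ∑ i, (0 : Fin d → ℕ) i = 0 := by simp
  have h1 : (1 : MPoly d) = bQ P hspan 0 := by
    rw [bQ_coe, Q_eq P h0, hP0]
  rw [h1, Lb, Module.Basis.constr_basis, if_pos rfl]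

theorem Lb_P (hspan : SpansPi P) {n : ℕ} (hn : 0 < n) (α : Idx d n) :
    Lb P hspan (P n α) = 0 := by
  rw [P_eq_Q P n α, ← bQ_coe P hspan, Lb, Module.Basis.constr_basis, if_neg]
  intro h0
  have h1 := α.2
  rw [h0] at h1
  simp only [Pi.zero_apply, Finset.sum_const_zero] at h1
  omega

section BackRec

variable (hspan : SpansPi P)
  (A : ∀ n : ℕ, Fin d → Matrix (Idx d n) (Idx d (n+1)) ℝ)
  (B : ∀ n : ℕ, Fin d → Matrix (Idx d n) (Idx d n) ℝ)

theorem Lb_mono_P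
    (hrec : ∀ (n : ℕ) (i : Fin d) (α : Idx d (n+1)), X i * P (n+1) α =
        (∑ β : Idx d (n+2), A (n+1) i α β • P (n+2) β) +
        (∑ β : Idx d (n+1), B (n+1) i α β • P (n+1) β) +
        ∑ β : Idx d n, (A n i)ᵀ α β • P n β) :
    ∀ k (κ : Fin d →₀ ℕ), (κ.sum fun _ e => e) = k → ∀ n, k < n → ∀ α : Idx d n,
      Lb P hspan ((monomial κ 1 : MPoly d) * P n α) = 0 := by
  intro k
  induction k with
  | zero =>
    intro κ hκ n hn α
    have hκ0 : κ = 0 := by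
      have h1 := finsupp_sum_eq κ
      rw [hκ] at h1
      exact Finsupp.ext fun j =>
        (Finset.sum_eq_zero_iff).mp h1.symm j (Finset.mem_univ j)
    rw [hκ0, MvPolynomial.monomial_zero', MvPolynomial.C_1, one_mul]
    exact Lb_P P hspan hn α
  | succ k ih =>
    intro κ hκ n hn α
    have hex : ∃ i, κ i ≠ 0 := by
      by_contra hno
      push_neg at hno
      have hz : κ = 0 := Finsupp.ext fun j => hno j
      rw [hz] at hκ
      simp at hκ
    obtain ⟨i, hi⟩ := hex
    set κ' := κ - Finsupp.single i 1 with hκ'def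
    have hle : Finsupp.single i 1 ≤ κ := by
      rw [Finsupp.single_le_iff]
      omega
    have hdecomp : Finsupp.single i 1 + κ' = κ := add_tsub_cancel_of_le hle
    have hκ's : (κ'.sum fun _ e => e) = k := by
      have h1 : ((Finsupp.single i 1 + κ').sum fun _ e => e)
          = 1 + (κ'.sum fun _ e => e) := by
        rw [Finsupp.sum_add_index' (fun _ => rfl) (fun _ _ _ => rfl),
          Finsupp.sum_single_index rfl]
      rw [hdecomp, hκ] at h1
      omega
    have hmon : (monomial κ 1 : MPoly d) = X i * monomial κ' 1 := by
      rw [MvPolynomial.X, MvPolynomial.monomial_mul, one_mul, hdecomp]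
    obtain ⟨m, rfl⟩ : ∃ m, n = m + 2 := ⟨n - 2, by omega⟩
    rw [hmon,
      show X i * monomial κ' 1 * P (m+2) α = monomial κ' 1 * (X i * P (m+2) α) by ring,
      hrec (m+1) i α, mul_add, mul_add, map_add, map_add, Finset.mul_sum, Finset.mul_sum,
      Finset.mul_sum, map_sum, map_sum, map_sum]
    have z1 : ∀ β : Idx d (m+3),
        Lb P hspan (monomial κ' 1 * (A (m+2) i α β • P (m+3) β)) = 0 := fun β => by
      rw [mul_smul_comm, _root_.map_smul, ih κ' hκ's (m+3) (by omega) β, smul_zero]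
    have z2 : ∀ β : Idx d (m+2),
        Lb P hspan (monomial κ' 1 * (B (m+2) i α β • P (m+2) β)) = 0 := fun β => by
      rw [mul_smul_comm, _root_.map_smul, ih κ' hκ's (m+2) (by omega) β, smul_zero]
    have z3 : ∀ β : Idx d (m+1),
        Lb P hspan (monomial κ' 1 * ((A (m+1) i)ᵀ α β • P (m+1) β)) = 0 := fun β => by
      rw [mul_smul_comm, _root_.map_smul, ih κ' hκ's (m+1) (by omega) β, smul_zero]
    rw [Finset.sum_eq_zero fun β _ => z1 β, Finset.sum_eq_zero fun β _ => z2 β,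
      Finset.sum_eq_zero fun β _ => z3 β, add_zero, add_zero]

theorem Lb_low
    (hrec : ∀ (n : ℕ) (i : Fin d) (α : Idx d (n+1)), X i * P (n+1) α =
        (∑ β : Idx d (n+2), A (n+1) i α β • P (n+2) β) +
        (∑ β : Idx d (n+1), B (n+1) i α β • P (n+1) β) +
        ∑ β : Idx d n, (A n i)ᵀ α β • P n β)
    {n : ℕ} {q : MPoly d} (hq : q.totalDegree < n) (α : Idx d n) :
    Lb P hspan (q * P n α) = 0 := by
  conv_lhs => rw [MvPolynomial.as_sum q]
  rw [Finset.sum_mul, map_sum]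
  refine Finset.sum_eq_zero fun κ hκ => ?_
  have h1 : (κ.sum fun _ e => e) < n := lt_of_le_of_lt (le_totalDegree hκ) hq
  rw [show (monomial κ (coeff κ q) : MPoly d) = coeff κ q • monomial κ 1 by
      rw [MvPolynomial.smul_monomial, smul_eq_mul, mul_one],
    smul_mul_assoc, _root_.map_smul,
    Lb_mono_P P hspan A B hrec (κ.sum fun _ e => e) κ rfl n h1 α, smul_zero]

theorem Lb_orth
    (hrec : ∀ (n : ℕ) (i : Fin d) (α : Idx d (n+1)), X i * P (n+1) α =
        (∑ β : Idx d (n+2), A (n+1) i α β • P (n+2) β) +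
        (∑ β : Idx d (n+1), B (n+1) i α β • P (n+1) β) +
        ∑ β : Idx d n, (A n i)ᵀ α β • P n β)
    {n m : ℕ} (hnm : n ≠ m) (α : Idx d n) (β : Idx d m) :
    Lb P hspan (P n α * P m β) = 0 := by
  rcases Nat.lt_or_ge m n with h | h
  · rw [mul_comm]
    exact Lb_low P hspan A B hrec
      (lt_of_le_of_lt (P_totalDegree_le P hspan m β) h) α
  · have hmn : n < m := by omega
    exact Lb_low P hspan A B hrec
      (lt_of_le_of_lt (P_totalDegree_le P hspan n α) hmn) β

theorem Lb_on (hP0 : ∀ α : Idx d 0, P 0 α = 1)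
    (hrec0 : ∀ (i : Fin d) (α : Idx d 0), X i * P 0 α =
        (∑ β : Idx d 1, A 0 i α β • P 1 β) + ∑ β : Idx d 0, B 0 i α β • P 0 β)
    (hrec : ∀ (n : ℕ) (i : Fin d) (α : Idx d (n+1)), X i * P (n+1) α =
        (∑ β : Idx d (n+2), A (n+1) i α β • P (n+2) β) +
        (∑ β : Idx d (n+1), B (n+1) i α β • P (n+1) β) +
        ∑ β : Idx d n, (A n i)ᵀ α β • P n β)
    (hrankStack : ∀ n : ℕ,
        (Matrix.of fun (p : Fin d × Idx d n) (β : Idx d (n+1)) => A n p.1 p.2 β).rank =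
          Fintype.card (Idx d (n+1))) :
    ∀ n (α β : Idx d n), Lb P hspan (P n α * P n β) = if α = β then 1 else 0 := by
  intro n
  induction n with
  | zero =>
    intro α β
    have hab : α = β := Subtype.ext (by
      funext j
      rw [(Finset.sum_eq_zero_iff).mp α.2 j (Finset.mem_univ j),
        (Finset.sum_eq_zero_iff).mp β.2 j (Finset.mem_univ j)])
    subst hab
    rw [if_pos rfl, hP0 α, one_mul, Lb_one P hspan hP0]
  | succ n ihn =>
    classical
    have Eq2 : ∀ (i : Fin d) (β : Idx d (n+1)) (αl : Idx d n),
        Lb P hspan ((X i * P (n+1) β) * P n αl) = A n i αl β := by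
      intro i β αl
      rw [hrec n i β, add_mul, add_mul, map_add, map_add,
        Finset.sum_mul, Finset.sum_mul, Finset.sum_mul, map_sum, map_sum, map_sum]
      have z1 : ∑ γ : Idx d (n+2),
          Lb P hspan ((A (n+1) i β γ • P (n+2) γ) * P n αl) = 0 :=
        Finset.sum_eq_zero fun γ _ => by
          rw [smul_mul_assoc, _root_.map_smul,
            Lb_orth P hspan A B hrec (by omega) γ αl, smul_zero]
      have z2 : ∑ γ : Idx d (n+1),
          Lb P hspan ((B (n+1) i β γ • P (n+1) γ) * P n αl) = 0 :=
        Finset.sum_eq_zero fun γ _ => by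
          rw [smul_mul_assoc, _root_.map_smul,
            Lb_orth P hspan A B hrec (by omega) γ αl, smul_zero]
      rw [z1, z2, zero_add, zero_add]
      rw [Finset.sum_congr rfl fun γ (_ : γ ∈ Finset.univ) => by
        rw [smul_mul_assoc, _root_.map_smul, ihn γ αl, smul_eq_mul]]
      rw [sum_mul_ite' (fun γ => (A n i)ᵀ β γ) αl, Matrix.transpose_apply]
    have Eq1 : ∀ (i : Fin d) (αl : Idx d n) (β : Idx d (n+1)),
        Lb P hspan ((X i * P n αl) * P (n+1) β)
          = ∑ γ : Idx d (n+1), A n i αl γ * Lb P hspan (P (n+1) γ * P (n+1) β) := by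
      intro i αl β
      cases n with
      | zero =>
        rw [hrec0 i αl, add_mul, map_add, Finset.sum_mul, Finset.sum_mul, map_sum, map_sum]
        have z2 : ∑ γ : Idx d 0, Lb P hspan ((B 0 i αl γ • P 0 γ) * P 1 β) = 0 :=
          Finset.sum_eq_zero fun γ _ => by
            rw [smul_mul_assoc, _root_.map_smul,
              Lb_orth P hspan A B hrec (by omega) γ β, smul_zero]
        rw [z2, add_zero]
        exact Finset.sum_congr rfl fun γ _ => by
          rw [smul_mul_assoc, _root_.map_smul, smul_eq_mul]
      | succ m =>
        rw [hrec m i αl, add_mul, add_mul, map_add, map_add,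
          Finset.sum_mul, Finset.sum_mul, Finset.sum_mul, map_sum, map_sum, map_sum]
        have z2 : ∑ γ : Idx d (m+1),
            Lb P hspan ((B (m+1) i αl γ • P (m+1) γ) * P (m+2) β) = 0 :=
          Finset.sum_eq_zero fun γ _ => by
            rw [smul_mul_assoc, _root_.map_smul,
              Lb_orth P hspan A B hrec (by omega) γ β, smul_zero]
        have z3 : ∑ γ : Idx d m,
            Lb P hspan (((A m i)ᵀ αl γ • P m γ) * P (m+2) β) = 0 :=
          Finset.sum_eq_zero fun γ _ => by
            rw [smul_mul_assoc, _root_.map_smul,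
              Lb_orth P hspan A B hrec (by omega) γ β, smul_zero]
        rw [z2, z3, add_zero, add_zero]
        exact Finset.sum_congr rfl fun γ _ => by
          rw [smul_mul_assoc, _root_.map_smul, smul_eq_mul]
    intro α β
    have key : ∀ (i : Fin d) (αl : Idx d n),
        ∑ γ : Idx d (n+1), A n i αl γ *
          (Lb P hspan (P (n+1) γ * P (n+1) β) - if γ = β then 1 else 0) = 0 := by
      intro i αl
      have h1 := Eq1 i αl β
      have h2 := Eq2 i β αl
      rw [show (X i * P (n+1) β) * P n αl = (X i * P n αl) * P (n+1) β by ring] at h2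
      have h3 : ∑ γ : Idx d (n+1), A n i αl γ * (if γ = β then (1:ℝ) else 0)
          = A n i αl β := sum_mul_ite' _ _
      calc ∑ γ : Idx d (n+1), A n i αl γ *
            (Lb P hspan (P (n+1) γ * P (n+1) β) - if γ = β then 1 else 0)
          = (∑ γ : Idx d (n+1), A n i αl γ * Lb P hspan (P (n+1) γ * P (n+1) β))
            - ∑ γ : Idx d (n+1), A n i αl γ * (if γ = β then (1:ℝ) else 0) := by
            rw [← Finset.sum_sub_distrib]
            exact Finset.sum_congr rfl fun γ _ => by ring
        _ = 0 := by rw [← h1, h2, h3, sub_self]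
    have hv := rank_mulVec_injective _ (hrankStack n)
      (v := fun γ => Lb P hspan (P (n+1) γ * P (n+1) β) - if γ = β then 1 else 0)
      (by
        funext p
        show (∑ γ : Idx d (n+1), (Matrix.of fun (p : Fin d × Idx d n) (β : Idx d (n+1)) =>
          A n p.1 p.2 β) p γ *
          (Lb P hspan (P (n+1) γ * P (n+1) β) - if γ = β then 1 else 0)) = 0
        exact key p.1 p.2)
    have h5 := congrFun hv α
    simp only [Pi.zero_apply, sub_eq_zero] at h5
    exact h5

end BackRec

theorem Lb_pos (hspan : SpansPi P)
    (hon : ∀ n (α β : Idx d n), Lb P hspan (P n α * P n β) = if α = β then 1 else 0)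
    (hoff : ∀ n m : ℕ, n ≠ m → ∀ (α : Idx d n) (β : Idx d m),
      Lb P hspan (P n α * P m β) = 0) :
    ∀ p : MPoly d, p ≠ 0 → 0 < Lb P hspan (p * p) := by
  classical
  intro p hp
  set c := (bQ P hspan).repr p with hc
  have hps : p = ∑ γ ∈ c.support, c γ • Q P γ := by
    conv_lhs => rw [← (bQ P hspan).linearCombination_repr p]
    rw [Finsupp.linearCombination_apply, Finsupp.sum]
    exact Finset.sum_congr rfl fun γ _ => by rw [bQ_coe]
  have hinner : ∀ γ ∈ c.support,
      (∑ δ ∈ c.support, c γ * (c δ * (if γ = δ then (1:ℝ) else 0))) = c γ * c γ := by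
    intro γ hγ
    rw [Finset.sum_congr rfl fun δ (_ : δ ∈ c.support) => by
      rw [mul_ite, mul_one, mul_zero, mul_ite, mul_zero]]
    rw [Finset.sum_ite_eq c.support γ (fun δ => c γ * c δ), if_pos hγ]
  have hL : Lb P hspan (p * p) = ∑ γ ∈ c.support, c γ * c γ := by
    conv_lhs => rw [hps]
    rw [Finset.sum_mul, map_sum]
    refine Finset.sum_congr rfl fun γ hγ => ?_
    rw [Finset.mul_sum, map_sum]
    rw [Finset.sum_congr rfl fun δ (_ : δ ∈ c.support) => by
      rw [smul_mul_assoc, mul_smul_comm, _root_.map_smul, _root_.map_smul, smul_eq_mul,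
        smul_eq_mul, L_Q_Q P (Lb P hspan) hon hoff γ δ]]
    exact hinner γ hγ
  have hne : c.support.Nonempty := by
    rw [Finsupp.support_nonempty_iff]
    intro hc0
    apply hp
    rw [hps, hc0]
    simp
  obtain ⟨γ0, hγ0⟩ := hne
  rw [hL]
  exact Finset.sum_pos' (fun γ _ => mul_self_nonneg _)
    ⟨γ0, hγ0, mul_self_pos.mpr (Finsupp.mem_support_iff.mp hγ0)⟩

end Backward

end Favard

/-- Favard's theorem for orthogonal polynomials of several variables: a degree-wise spanning
sequence `{ℙ_n}` with `ℙ_0 = 1` is orthonormal for some positive definite linear functional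
if and only if it satisfies a three-term relation
`x_i ℙ_n = A_{n,i} ℙ_{n+1} + B_{n,i} ℙ_n + A_{n-1,i}ᵀ ℙ_{n-1}` with symmetric `B_{n,i}`,
`rank A_{n,i} = r_n^d` and the stacked matrix `A_n` of rank `r_{n+1}^d`. -/
theorem favard_theorem_several_variables
    (P : ∀ n, Idx d n → MPoly d)
    (hP0 : ∀ α : Idx d 0, P 0 α = 1)
    (hspan : SpansPi P) :
    (∃ L : MPoly d →ₗ[ℝ] ℝ,
      (∀ p : MPoly d, p ≠ 0 → 0 < L (p * p)) ∧
      (∀ n (α β : Idx d n), L (P n α * P n β) = if α = β then 1 else 0) ∧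
      (∀ n m : ℕ, n ≠ m → ∀ (α : Idx d n) (β : Idx d m), L (P n α * P m β) = 0)) ↔
    (∃ (A : ∀ n : ℕ, Fin d → Matrix (Idx d n) (Idx d (n+1)) ℝ)
       (B : ∀ n : ℕ, Fin d → Matrix (Idx d n) (Idx d n) ℝ),
      (∀ (n : ℕ) (i : Fin d), (B n i).IsSymm) ∧
      (∀ (i : Fin d) (α : Idx d 0), X i * P 0 α =
        (∑ β : Idx d 1, A 0 i α β • P 1 β) + ∑ β : Idx d 0, B 0 i α β • P 0 β) ∧
      (∀ (n : ℕ) (i : Fin d) (α : Idx d (n+1)), X i * P (n+1) α =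
        (∑ β : Idx d (n+2), A (n+1) i α β • P (n+2) β) +
        (∑ β : Idx d (n+1), B (n+1) i α β • P (n+1) β) +
        ∑ β : Idx d n, (A n i)ᵀ α β • P n β) ∧
      (∀ (n : ℕ) (i : Fin d), (A n i).rank = Fintype.card (Idx d n)) ∧
      (∀ n : ℕ,
        (Matrix.of fun (p : Fin d × Idx d n) (β : Idx d (n+1)) => A n p.1 p.2 β).rank =
          Fintype.card (Idx d (n+1)))) := by
  constructor
  · rintro ⟨L, hpos, hon, hoff⟩
    refine ⟨fun n i => Matrix.of fun α β => L (X i * P n α * P (n+1) β),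
            fun n i => Matrix.of fun α β => L (X i * P n α * P n β),
            ?_, ?_, ?_, ?_, ?_⟩
    · intro n i
      refine Matrix.IsSymm.ext fun α β => ?_
      exact congrArg L (by ring)
    · intro i α
      exact Favard.forward_rec0 P hspan L hon hoff i α
    · intro n i α
      exact Favard.forward_rec P hspan L hon hoff n i α
    · intro n i
      exact (Favard.forward_A_li P hspan L hpos hon hoff n i).rank_matrix
    · intro n
      rw [← Matrix.rank_transpose]
      exact (Favard.forward_stack_li P hspan L hpos hoff hon n).rank_matrix
  · rintro ⟨A, B, hsym, hrec0, hrec, hrankA, hrankStack⟩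
    have hon := Favard.Lb_on P hspan A B hP0 hrec0 hrec hrankStack
    have hoff : ∀ n m : ℕ, n ≠ m → ∀ (α : Idx d n) (β : Idx d m),
        Favard.Lb P hspan (P n α * P m β) = 0 :=
      fun n m hnm α β => Favard.Lb_orth P hspan A B hrec hnm α β
    exact ⟨Favard.Lb P hspan, Favard.Lb_pos P hspan hon hoff, hon, hoff⟩
end
end

section
/- Let L be a positive definite moment functional on real polynomials in d variables, let {ℙ_n} be an orthonormal family with respect to L (each P_α^n of degree n, spanning Π_n^d degree-wise, L(P_α^n P_β^m) = δ_{n,m} δ_{α,β}), and let A_{n,i}, B_{n,i} be the coefficient matrices of the three-term relation x_i ℙ_n = A_{n,i} ℙ_{n+1} + B_{n,i} ℙ_n + A_{n−1,i}ᵀ ℙ_{n−1} (with A_{−1,i} := 0). Then for all 1 ≤ i, j ≤ d and all k ≥ 0 the following commutativity relations hold: (i) A_{k,i} A_{k+1,j} = A_{k,j} A_{k+1,i}; (ii) A_{k,i} B_{k+1,j} + B_{k,i} A_{k,j} = B_{k,j} A_{k,i} + A_{k,j} B_{k+1,i}; (iii) A_{k−1,i}ᵀ A_{k−1,j} + B_{k,i}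 B_{k,j} + A_{k,i} A_{k,j}ᵀ = A_{k−1,j}ᵀ A_{k−1,i} + B_{k,j} B_{k,i} + A_{k,j} A_{k,i}ᵀ. -/
open MvPolynomial Matrix MeasureTheory

noncomputable section

variable {d : ℕ}

section Aux
variable (L : MPoly d →ₗ[ℝ] ℝ) (P : ∀ n, Idx d n → MPoly d)
    (hspan : SpansPi P)
    (hon : ∀ n (α β : Idx d n), L (P n α * P n β) = if α = β then 1 else 0)
    (hoff : ∀ n m : ℕ, n ≠ m → ∀ (α : Idx d n) (β : Idx d m), L (P n α * P m β) = 0)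

include hspan hon hoff in
lemma expand_aux_s8 (n : ℕ) (p : MPoly d) (hp : p.totalDegree ≤ n) :
    p = ∑ m ∈ Finset.range (n+1), ∑ α : Idx d m, L (p * P m α) • P m α := by
  have hmem : p ∈ Submodule.span ℝ {q | ∃ m, m ≤ n ∧ ∃ α : Idx d m, q = P m α} := by
    rw [hspan n, MvPolynomial.mem_restrictTotalDegree]; exact hp
  clear hp
  induction hmem using Submodule.span_induction with
  | mem q hq =>
    obtain ⟨m', hm', α', rfl⟩ := hq
    rw [Finset.sum_eq_single m']
    · rw [Finset.sum_eq_single α']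
      · rw [hon, if_pos rfl, one_smul]
      · intro b _ hb
        rw [hon, if_neg (fun h => hb h.symm), zero_smul]
      · intro h; exact absurd (Finset.mem_univ α') h
    · intro b _ hb
      apply Finset.sum_eq_zero
      intro γ _
      rw [hoff m' b (fun h => hb (h.symm ▸ rfl)), zero_smul]
    · intro h
      exact absurd (Finset.mem_range.mpr (Nat.lt_succ_of_le hm')) h
  | zero => simp
  | add q r _ _ hq hr =>
    simp only [add_mul, map_add, add_smul, Finset.sum_add_distrib]
    rw [← hq, ← hr]
  | smul c q _ hq =>
    conv_lhs => rw [hq]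
    simp only [Finset.smul_sum, smul_smul]
    refine Finset.sum_congr rfl fun m _ => Finset.sum_congr rfl fun γ _ => ?_
    rw [smul_mul_assoc, LinearMap.map_smul, smul_eq_mul]

lemma degX_aux (hdeg : ∀ n (α : Idx d n), (P n α).totalDegree = n) (i : Fin d) (n : ℕ)
    (α : Idx d n) : (X i * P n α).totalDegree ≤ n + 1 := by
  calc (X i * P n α).totalDegree ≤ (X i : MPoly d).totalDegree + (P n α).totalDegree :=
        totalDegree_mul _ _
    _ ≤ n + 1 := by rw [totalDegree_X, hdeg]; omega

variable (hdeg : ∀ n (α : Idx d n), (P n α).totalDegree = n)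
include hdeg hspan hon hoff

lemma master_aux (i j : Fin d) (n m : ℕ) (α : Idx d n) (β : Idx d m) :
    L (X i * X j * P n α * P m β) =
      ∑ l ∈ Finset.range (n+2), ∑ γ : Idx d l,
        L (X i * P n α * P l γ) * L (X j * P m β * P l γ) := by
  have he := expand_aux_s8 L P hspan hon hoff (n+1) (X i * P n α) (degX_aux P hdeg i n α)
  have h1 : X i * X j * P n α * P m β = (X j * P m β) * (X i * P n α) := by ring
  rw [h1]
  conv_lhs => rw [he]
  rw [Finset.mul_sum, map_sum]
  refine Finset.sum_congr rfl fun l _ => ?_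
  rw [Finset.mul_sum, map_sum]
  refine Finset.sum_congr rfl fun γ _ => ?_
  rw [mul_smul_comm, LinearMap.map_smul, smul_eq_mul, mul_comm]

lemma vanish_aux_s8 (i : Fin d) (n m : ℕ) (h : n + 2 ≤ m) (α : Idx d n) (β : Idx d m) :
    L (X i * P n α * P m β) = 0 := by
  have he := expand_aux_s8 L P hspan hon hoff (n+1) (X i * P n α) (degX_aux P hdeg i n α)
  conv_lhs => rw [he]
  rw [Finset.sum_mul, map_sum]
  refine Finset.sum_eq_zero fun l hl => ?_
  rw [Finset.sum_mul, map_sum]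
  refine Finset.sum_eq_zero fun γ _ => ?_
  rw [smul_mul_assoc, LinearMap.map_smul, smul_eq_mul,
    hoff l m (by simp at hl; omega) γ β, mul_zero]

lemma vanish'_aux (i : Fin d) (n m : ℕ) (h : m + 2 ≤ n) (α : Idx d n) (β : Idx d m) :
    L (X i * P n α * P m β) = 0 := by
  have h1 : X i * P n α * P m β = X i * P m β * P n α := by ring
  rw [h1]
  exact vanish_aux_s8 L P hspan hon hoff hdeg i m n h β α

lemma red1_aux (i j : Fin d) (k : ℕ) (α : Idx d k) (β : Idx d (k+2)) :
    L (X i * X j * P k α * P (k+2) β) =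
      ∑ γ : Idx d (k+1), L (X i * P k α * P (k+1) γ) * L (X j * P (k+1) γ * P (k+2) β) := by
  rw [master_aux L P hspan hon hoff hdeg i j k (k+2) α β]
  rw [Finset.sum_eq_single_of_mem (k+1) (by simp)]
  · refine Finset.sum_congr rfl fun γ _ => ?_
    have e : X j * P (k+2) β * P (k+1) γ = X j * P (k+1) γ * P (k+2) β := by ring
    rw [e]
  · intro b hb hbne
    refine Finset.sum_eq_zero fun γ _ => ?_
    rw [vanish'_aux L P hspan hon hoff hdeg j (k+2) b (by simp at hb; omega) β γ, mul_zero]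

lemma red2_aux (i j : Fin d) (k : ℕ) (α : Idx d k) (β : Idx d (k+1)) :
    L (X i * X j * P k α * P (k+1) β) =
      (∑ γ : Idx d (k+1), L (X i * P k α * P (k+1) γ) * L (X j * P (k+1) γ * P (k+1) β)) +
      ∑ γ : Idx d k, L (X i * P k α * P k γ) * L (X j * P k γ * P (k+1) β) := by
  rw [master_aux L P hspan hon hoff hdeg i j k (k+1) α β,
    Finset.sum_range_succ, Finset.sum_range_succ]
  have h0 : ∑ l ∈ Finset.range k, ∑ γ : Idx d l,
      L (X i * P k α * P l γ) * L (X j * P (k+1) β * P l γ) = 0 := by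
    refine Finset.sum_eq_zero fun l hl => Finset.sum_eq_zero fun γ _ => ?_
    rw [vanish'_aux L P hspan hon hoff hdeg j (k+1) l (by simp at hl; omega) β γ, mul_zero]
  rw [h0, zero_add, add_comm]
  congr 1
  · refine Finset.sum_congr rfl fun γ _ => ?_
    have e : X j * P (k+1) β * P (k+1) γ = X j * P (k+1) γ * P (k+1) β := by ring
    rw [e]
  · refine Finset.sum_congr rfl fun γ _ => ?_
    have e : X j * P (k+1) β * P k γ = X j * P k γ * P (k+1) β := by ring
    rw [e]

lemma red0_aux (i j : Fin d) (α β : Idx d 0) :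
    L (X i * X j * P 0 α * P 0 β) =
      (∑ γ : Idx d 0, L (X i * P 0 α * P 0 γ) * L (X j * P 0 γ * P 0 β)) +
      ∑ γ : Idx d 1, L (X i * P 0 α * P 1 γ) * L (X j * P 0 β * P 1 γ) := by
  rw [master_aux L P hspan hon hoff hdeg i j 0 0 α β]
  rw [show (0:ℕ)+2 = 2 from rfl, Finset.sum_range_succ, Finset.sum_range_succ,
    Finset.sum_range_zero, zero_add]
  congr 1
  refine Finset.sum_congr rfl fun γ _ => ?_
  have e : X j * P 0 β * P 0 γ = X j * P 0 γ * P 0 β := by ring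
  rw [e]

lemma red3_aux (i j : Fin d) (k : ℕ) (α β : Idx d (k+1)) :
    L (X i * X j * P (k+1) α * P (k+1) β) =
      (∑ γ : Idx d k, L (X i * P k γ * P (k+1) α) * L (X j * P k γ * P (k+1) β)) +
      (∑ γ : Idx d (k+1), L (X i * P (k+1) α * P (k+1) γ) * L (X j * P (k+1) γ * P (k+1) β)) +
      ∑ γ : Idx d (k+2), L (X i * P (k+1) α * P (k+2) γ) * L (X j * P (k+1) β * P (k+2) γ) := by
  rw [master_aux L P hspan hon hoff hdeg i j (k+1) (k+1) α β]
  rw [show k+1+2 = (k+2)+1 from rfl, Finset.sum_range_succ,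
    show k+2 = (k+1)+1 from rfl, Finset.sum_range_succ, Finset.sum_range_succ]
  have h0 : ∑ l ∈ Finset.range k, ∑ γ : Idx d l,
      L (X i * P (k+1) α * P l γ) * L (X j * P (k+1) β * P l γ) = 0 := by
    refine Finset.sum_eq_zero fun l hl => Finset.sum_eq_zero fun γ _ => ?_
    rw [vanish'_aux L P hspan hon hoff hdeg j (k+1) l (by simp at hl; omega) β γ, mul_zero]
  rw [h0, zero_add]
  congr 1
  · congr 1
    · refine Finset.sum_congr rfl fun γ _ => ?_
      have e1 : X i * P (k+1) α * P k γ = X i * P k γ * P (k+1) α := by ring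
      have e2 : X j * P (k+1) β * P k γ = X j * P k γ * P (k+1) β := by ring
      rw [e1, e2]
    · refine Finset.sum_congr rfl fun γ _ => ?_
      have e : X j * P (k+1) β * P (k+1) γ = X j * P (k+1) γ * P (k+1) β := by ring
      rw [e]
end Aux

/-- The commutativity relations satisfied by the coefficient matrices of the three-term
relation of an orthonormal family.  The third relation is stated for `k = 0`
(with `A_{-1,i} := 0`) and, shifted by one, for all `k ≥ 1`. -/
theorem three_term_coefficients_commutativity_relations
    (L : MPoly d →ₗ[ℝ] ℝ)
    (hL : ∀ p : MPoly d, p ≠ 0 → 0 < L (p * p))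
    (P : ∀ n, Idx d n → MPoly d)
    (hdeg : ∀ n (α : Idx d n), (P n α).totalDegree = n)
    (hspan : SpansPi P)
    (hon : ∀ n (α β : Idx d n), L (P n α * P n β) = if α = β then 1 else 0)
    (hoff : ∀ n m : ℕ, n ≠ m → ∀ (α : Idx d n) (β : Idx d m), L (P n α * P m β) = 0) :
    (∀ (k : ℕ) (i j : Fin d),
      Amat L P k i * Amat L P (k+1) j = Amat L P k j * Amat L P (k+1) i) ∧
    (∀ (k : ℕ) (i j : Fin d),
      Amat L P k i * Bmat L P (k+1) j + Bmat L P k i * Amat L P k j =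
        Bmat L P k j * Amat L P k i + Amat L P k j * Bmat L P (k+1) i) ∧
    (∀ i j : Fin d,
      Bmat L P 0 i * Bmat L P 0 j + Amat L P 0 i * (Amat L P 0 j)ᵀ =
        Bmat L P 0 j * Bmat L P 0 i + Amat L P 0 j * (Amat L P 0 i)ᵀ) ∧
    (∀ (k : ℕ) (i j : Fin d),
      (Amat L P k i)ᵀ * Amat L P k j + Bmat L P (k+1) i * Bmat L P (k+1) j +
          Amat L P (k+1) i * (Amat L P (k+1) j)ᵀ =
        (Amat L P k j)ᵀ * Amat L P k i + Bmat L P (k+1) j * Bmat L P (k+1) i +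
          Amat L P (k+1) j * (Amat L P (k+1) i)ᵀ) := by

  refine ⟨fun k i j => ?_, fun k i j => ?_, fun i j => ?_, fun k i j => ?_⟩
  · ext α β
    simp only [Matrix.mul_apply, Amat, Matrix.of_apply]
    rw [← red1_aux L P hspan hon hoff hdeg i j k α β,
      ← red1_aux L P hspan hon hoff hdeg j i k α β]
    congr 1; ring
  · ext α β
    simp only [Matrix.add_apply, Matrix.mul_apply, Amat, Bmat, Matrix.of_apply]
    rw [← red2_aux L P hspan hon hoff hdeg i j k α β,
      show X i * X j * P k α * P (k+1) β = X j * X i * P k α * P (k+1) β from by ring,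
      red2_aux L P hspan hon hoff hdeg j i k α β]
    exact add_comm _ _
  · ext α β
    simp only [Matrix.add_apply, Matrix.mul_apply, Matrix.transpose_apply, Amat, Bmat,
      Matrix.of_apply]
    rw [← red0_aux L P hspan hon hoff hdeg i j α β,
      ← red0_aux L P hspan hon hoff hdeg j i α β]
    congr 1; ring
  · ext α β
    simp only [Matrix.add_apply, Matrix.mul_apply, Matrix.transpose_apply, Amat, Bmat,
      Matrix.of_apply]
    rw [← red3_aux L P hspan hon hoff hdeg i j k α β,
      ← red3_aux L P hspan hon hoff hdeg j i k α β]
    congr 1; ring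
end
end

section
/- Let L be a positive definite moment functional on real polynomials in d variables, let {ℙ_n} be an orthonormal family with respect to L, and let B_{n,i} = L(x_i ℙ_n ℙ_nᵀ) be the diagonal coefficient matrices of its three-term relation. Then L is centrally symmetric—i.e. L(x^α) = 0 for every multi-index α of odd total degree—if and only if B_{n,i} = 0 for all n ∈ ℕ and 1 ≤ i ≤ d. Furthermore, if L is centrally symmetric, then every polynomial P of degree n that is orthogonal with respect to L to all polynomials of degree less than n involves only monomials x^β with |β| ≡ n (mod 2): a sum of monomials of even total degrees if n is even, and of odd total degrees if n is odd. -/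
open MvPolynomial Matrix MeasureTheory

noncomputable section

variable {d : ℕ}

namespace CSaux

/-- total degree of an exponent finsupp -/
def degS {d : ℕ} (μ : Fin d →₀ ℕ) : ℕ := ∑ i, μ i

lemma degS_sum {d : ℕ} (μ : Fin d →₀ ℕ) : (μ.sum fun _ e => e) = degS μ :=
  Finsupp.sum_fintype _ _ (fun _ => rfl)

lemma degS_add {d : ℕ} (a b : Fin d →₀ ℕ) : degS (a + b) = degS a + degS b := by
  simp [degS, Finsupp.add_apply, Finset.sum_add_distrib]

lemma degS_symm {d : ℕ} (ν : Fin d → ℕ) :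
    degS (Finsupp.equivFunOnFinite.symm ν) = ∑ i, ν i := by
  simp [degS, Finsupp.equivFunOnFinite_symm_coe]

lemma degS_le_totalDegree {d : ℕ} {p : MPoly d} {μ : Fin d →₀ ℕ} (h : μ ∈ p.support) :
    degS μ ≤ p.totalDegree := degS_sum μ ▸ MvPolynomial.le_totalDegree h

lemma support_mono {d : ℕ} (ν : Fin d → ℕ) :
    (mono ν).support = {Finsupp.equivFunOnFinite.symm ν} := by
  simp [mono, MvPolynomial.support_monomial]

lemma totalDegree_mono {d : ℕ} (ν : Fin d → ℕ) : (mono ν).totalDegree = ∑ i, ν i := by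
  rw [mono, MvPolynomial.totalDegree_monomial _ (one_ne_zero), degS_sum, degS_symm]

lemma mono_add {d : ℕ} (a b : Fin d → ℕ) : mono (a + b) = mono a * mono b := by
  have h : Finsupp.equivFunOnFinite.symm (a + b) =
      Finsupp.equivFunOnFinite.symm a + Finsupp.equivFunOnFinite.symm b := by
    ext j; simp [Finsupp.equivFunOnFinite_symm_coe]
  rw [mono, mono, mono, MvPolynomial.monomial_mul, one_mul, h]

lemma monomial_eq_smul_mono {d : ℕ} (μ : Fin d →₀ ℕ) (c : ℝ) :
    (MvPolynomial.monomial μ) c = c • mono (⇑μ) := by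
  rw [mono]
  have : Finsupp.equivFunOnFinite.symm ⇑μ = μ := by
    ext j; simp [Finsupp.equivFunOnFinite_symm_coe]
  rw [this, MvPolynomial.smul_monomial, smul_eq_mul, mul_one]

lemma support_sum_monomial_subset {d : ℕ} (s : Finset (Fin d →₀ ℕ)) (f : (Fin d →₀ ℕ) → ℝ) :
    (∑ μ ∈ s, (MvPolynomial.monomial μ) (f μ)).support ⊆ s := by
  classical
  intro ν hν
  rw [MvPolynomial.mem_support_iff, MvPolynomial.coeff_sum] at hν
  by_contra hns
  refine hν (Finset.sum_eq_zero fun μ hμ => ?_)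
  rw [MvPolynomial.coeff_monomial]
  exact if_neg (by rintro rfl; exact hns hμ)

variable {d : ℕ} (L : MPoly d →ₗ[ℝ] ℝ)

lemma kill_odd {D : ℕ}
    (hs : ∀ γ : Fin d → ℕ, Odd (∑ i, γ i) → (∑ i, γ i) ≤ D → L (mono γ) = 0)
    (p : MPoly d) (hodd : ∀ μ ∈ p.support, Odd (degS μ)) (hdeg : p.totalDegree ≤ D) :
    L p = 0 := by
  conv_lhs => rw [← MvPolynomial.support_sum_monomial_coeff p]
  rw [map_sum]
  refine Finset.sum_eq_zero fun μ hμ => ?_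
  rw [monomial_eq_smul_mono, LinearMap.map_smul, smul_eq_mul]
  have h1 : (∑ i, (⇑μ) i) = degS μ := rfl
  rw [hs (⇑μ) (h1 ▸ hodd μ hμ) (h1 ▸ le_trans (degS_le_totalDegree hμ) hdeg), mul_zero]

lemma support_mul_parity {p q : MPoly d} {a b : ℕ}
    (hp : ∀ μ ∈ p.support, degS μ % 2 = a % 2) (hq : ∀ μ ∈ q.support, degS μ % 2 = b % 2) :
    ∀ μ ∈ (p * q).support, degS μ % 2 = (a + b) % 2 := by
  intro μ hμ
  obtain ⟨x, hx, y, hy, rfl⟩ := Finset.mem_add.1 (MvPolynomial.support_mul p q hμ)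
  have h1 := hp x hx
  have h2 := hq y hy
  rw [degS_add]
  omega

lemma X_parity (i : Fin d) : ∀ μ ∈ (MvPolynomial.X (R := ℝ) i).support, degS μ % 2 = 1 % 2 := by
  intro μ hμ
  rw [MvPolynomial.support_X, Finset.mem_singleton] at hμ
  subst hμ
  simp [degS, Finsupp.single_apply, Finset.sum_ite_eq']

lemma mono_parity (ν : Fin d → ℕ) :
    ∀ μ ∈ (mono ν).support, degS μ % 2 = (∑ i, ν i) % 2 := by
  intro μ hμ
  rw [support_mono, Finset.mem_singleton] at hμ
  subst hμ
  rw [degS_symm]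

variable (P : ∀ n, Idx d n → MPoly d)

lemma orth_lower (hspan : SpansPi P)
    (hoff : ∀ n m : ℕ, n ≠ m → ∀ (α : Idx d n) (β : Idx d m), L (P n α * P m β) = 0) :
    ∀ n (α : Idx d n) (R : MPoly d), IsDegLt R n → L (P n α * R) = 0 := by
  intro n α R hR
  rcases hR with rfl | hR
  · simp
  obtain ⟨k, rfl⟩ : ∃ k, n = k + 1 := ⟨n - 1, by omega⟩
  have hRm : R ∈ MvPolynomial.restrictTotalDegree (Fin d) ℝ k :=
    (MvPolynomial.mem_restrictTotalDegree _ _ _).2 (by omega)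
  rw [← hspan k] at hRm
  refine Submodule.span_induction (p := fun x _ => L (P (k+1) α * x) = 0)
    ?_ ?_ ?_ ?_ hRm
  · rintro x ⟨m, hm, β, rfl⟩
    exact hoff (k+1) m (by omega) α β
  · simp
  · intro x y _ _ hx hy
    rw [mul_add, map_add, hx, hy, add_zero]
  · intro c x _ hx
    rw [mul_smul_comm, LinearMap.map_smul, hx, smul_zero]

lemma zero_of_orth (hL : ∀ p : MPoly d, p ≠ 0 → 0 < L (p * p)) (hspan : SpansPi P)
    {N : ℕ} {q : MPoly d} (hq : q.totalDegree ≤ N)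
    (h : ∀ m ≤ N, ∀ α : Idx d m, L (q * P m α) = 0) : q = 0 := by
  by_contra hne
  have hqm : q ∈ MvPolynomial.restrictTotalDegree (Fin d) ℝ N :=
    (MvPolynomial.mem_restrictTotalDegree _ _ _).2 hq
  rw [← hspan N] at hqm
  have key : L (q * q) = 0 := by
    refine Submodule.span_induction (p := fun x _ => L (q * x) = 0) ?_ ?_ ?_ ?_ hqm
    · rintro x ⟨m, hm, β, rfl⟩
      exact h m hm β
    · simp
    · intro x y _ _ hx hy
      rw [mul_add, map_add, hx, hy, add_zero]
    · intro c x _ hx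
      rw [mul_smul_comm, LinearMap.map_smul, hx, smul_zero]
  exact absurd key (ne_of_gt (hL q hne))

lemma expansion (hL : ∀ p : MPoly d, p ≠ 0 → 0 < L (p * p)) (hspan : SpansPi P)
    (hdeg : ∀ n (α : Idx d n), (P n α).totalDegree = n)
    (hon : ∀ n (α β : Idx d n), L (P n α * P n β) = if α = β then 1 else 0)
    (hoff : ∀ n m : ℕ, n ≠ m → ∀ (α : Idx d n) (β : Idx d m), L (P n α * P m β) = 0)
    {N : ℕ} (q : MPoly d) (hq : q.totalDegree ≤ N) :
    q = ∑ m ∈ Finset.range (N+1), ∑ α : Idx d m, L (q * P m α) • P m α := by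
  classical
  set s : MPoly d := ∑ m ∈ Finset.range (N+1), ∑ α : Idx d m, L (q * P m α) • P m α with hs
  have hdegs : s.totalDegree ≤ N := by
    refine le_trans (MvPolynomial.totalDegree_finset_sum _ _) (Finset.sup_le fun m hm => ?_)
    refine le_trans (MvPolynomial.totalDegree_finset_sum _ _) (Finset.sup_le fun α _ => ?_)
    refine le_trans (MvPolynomial.totalDegree_smul_le _ _) ?_
    rw [hdeg]
    exact Nat.lt_succ_iff.1 (Finset.mem_range.1 hm)
  have horth : ∀ k ≤ N, ∀ β : Idx d k, L ((q - s) * P k β) = 0 := by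
    intro k hk β
    have hsP : L (s * P k β) = L (q * P k β) := by
      rw [hs, Finset.sum_mul, map_sum]
      rw [Finset.sum_eq_single k]
      · rw [Finset.sum_mul, map_sum]
        rw [Finset.sum_eq_single β]
        · rw [smul_mul_assoc, LinearMap.map_smul, hon, if_pos rfl, smul_eq_mul, mul_one]
        · intro α _ hα
          rw [smul_mul_assoc, LinearMap.map_smul, hon, if_neg hα, smul_zero]
        · intro hβ
          exact absurd (Finset.mem_univ β) hβ
      · intro m _ hm
        rw [Finset.sum_mul, map_sum]
        refine Finset.sum_eq_zero fun α _ => ?_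
        rw [smul_mul_assoc, LinearMap.map_smul, hoff m k hm, smul_zero]
      · intro hkk
        exact absurd (Finset.mem_range.2 (Nat.lt_succ_iff.2 hk)) hkk
    rw [sub_mul, map_sub, hsP, sub_self]
  have hdiff : q - s = 0 := by
    refine zero_of_orth L P hL hspan ?_ horth
    exact le_trans (MvPolynomial.totalDegree_sub _ _) (max_le hq hdegs)
  exact sub_eq_zero.1 hdiff

lemma purity_of_orth (hL : ∀ p : MPoly d, p ≠ 0 → 0 < L (p * p)) {n : ℕ}
    (hsym : ∀ γ : Fin d → ℕ, Odd (∑ i, γ i) → (∑ i, γ i) + 1 ≤ 2 * n → L (mono γ) = 0)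
    {Q : MPoly d} (hQ : Q.totalDegree ≤ n)
    (horth : ∀ R : MPoly d, IsDegLt R n → L (Q * R) = 0) :
    ∀ μ ∈ Q.support, degS μ % 2 = n % 2 := by
  classical
  by_contra hbad
  push_neg at hbad
  obtain ⟨μ0, hμ0, hpar0⟩ := hbad
  set S := Q.support.filter (fun μ => ¬ (degS μ % 2 = n % 2)) with hSdef
  set T := Q.support.filter (fun μ => degS μ % 2 = n % 2) with hTdef
  set Qp : MPoly d := ∑ μ ∈ S, MvPolynomial.monomial μ (MvPolynomial.coeff μ Q) with hQp
  set Qg : MPoly d := ∑ μ ∈ T, MvPolynomial.monomial μ (MvPolynomial.coeff μ Q) with hQg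
  have hμ0S : μ0 ∈ S := Finset.mem_filter.2 ⟨hμ0, hpar0⟩
  have hSlt : ∀ μ ∈ S, degS μ < n := by
    intro μ hμ
    have h1 := Finset.mem_filter.1 hμ
    have h2 : degS μ ≤ n := le_trans (degS_le_totalDegree h1.1) hQ
    have h3 : degS μ ≠ n := fun h => h1.2 (by rw [h])
    omega
  have hn1 : 1 ≤ n := by have := hSlt μ0 hμ0S; omega
  have hQp_ne : Qp ≠ 0 := by
    intro h
    have hc : MvPolynomial.coeff μ0 Qp = MvPolynomial.coeff μ0 Q := by
      rw [hQp, MvPolynomial.coeff_sum]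
      rw [Finset.sum_eq_single μ0]
      · rw [MvPolynomial.coeff_monomial, if_pos rfl]
      · intro μ _ hμ
        rw [MvPolynomial.coeff_monomial, if_neg hμ]
      · intro h'; exact absurd hμ0S h'
    rw [h, MvPolynomial.coeff_zero] at hc
    exact MvPolynomial.mem_support_iff.1 hμ0 hc.symm
  have hdegQp : Qp.totalDegree ≤ n - 1 := by
    refine le_trans (MvPolynomial.totalDegree_finset_sum _ _) (Finset.sup_le fun μ hμ => ?_)
    by_cases hc : MvPolynomial.coeff μ Q = 0
    · rw [hc]; simp
    · rw [MvPolynomial.totalDegree_monomial _ hc, degS_sum]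
      have := hSlt μ hμ; omega
  have h1 : L (Q * Qp) = 0 := horth Qp (Or.inr (by omega))
  have hsplit : Q = Qg + Qp := by
    rw [hQg, hQp, hTdef, hSdef]
    rw [Finset.sum_filter_add_sum_filter_not Q.support _
      (fun μ => MvPolynomial.monomial μ (MvPolynomial.coeff μ Q))]
    exact (MvPolynomial.support_sum_monomial_coeff Q).symm
  have hQg_par : ∀ μ ∈ Qg.support, degS μ % 2 = n % 2 := by
    intro μ hμ
    have := support_sum_monomial_subset T _ hμ
    exact (Finset.mem_filter.1 this).2
  have hQp_par : ∀ μ ∈ Qp.support, degS μ % 2 = (n+1) % 2 := by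
    intro μ hμ
    have h2 := (Finset.mem_filter.1 (support_sum_monomial_subset S _ hμ)).2
    omega
  have hdegQg : Qg.totalDegree ≤ n := by
    refine le_trans (MvPolynomial.totalDegree_finset_sum _ _) (Finset.sup_le fun μ hμ => ?_)
    by_cases hc : MvPolynomial.coeff μ Q = 0
    · rw [hc]; simp
    · rw [MvPolynomial.totalDegree_monomial _ hc, degS_sum]
      exact le_trans (degS_le_totalDegree (Finset.mem_filter.1 hμ).1) hQ
  have h2 : L (Qg * Qp) = 0 := by
    refine kill_odd L (D := 2 * n) (fun γ hγ hγle => ?_) _ ?_ ?_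
    · refine hsym γ hγ ?_
      rw [Nat.odd_iff] at hγ
      omega
    · intro μ hμ
      have := support_mul_parity hQg_par hQp_par μ hμ
      rw [Nat.odd_iff]
      omega
    · refine le_trans (MvPolynomial.totalDegree_mul _ _) ?_
      omega
  have h3 : L (Qp * Qp) = 0 := by
    have : L (Q * Qp) = L (Qg * Qp) + L (Qp * Qp) := by
      rw [hsplit, add_mul, map_add]
    rw [h1, h2] at this
    linarith
  exact absurd h3 (ne_of_gt (hL Qp hQp_ne))

lemma exists_split_k (k : ℕ) : ∀ (γ : Fin d → ℕ), k ≤ ∑ i, γ i →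
    ∃ μ ν : Fin d → ℕ, (∑ i, μ i) = k ∧ γ = μ + ν := by
  induction k with
  | zero => exact fun γ _ => ⟨0, γ, by simp, by simp⟩
  | succ k ih =>
    intro γ hk
    obtain ⟨μ, ν, hμ, hγ⟩ := ih γ (Nat.le_of_succ_le hk)
    have hsum : ∑ i, γ i = ∑ i, μ i + ∑ i, ν i := by
      rw [hγ]; simp [Pi.add_apply, Finset.sum_add_distrib]
    have hν : 1 ≤ ∑ i, ν i := by omega
    obtain ⟨i, hi⟩ : ∃ i, 0 < ν i := by
      by_contra h
      push_neg at h
      have : ∑ i, ν i = 0 := Finset.sum_eq_zero fun i _ => Nat.le_zero.1 (h i)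
      omega
    refine ⟨Function.update μ i (μ i + 1), Function.update ν i (ν i - 1), ?_, ?_⟩
    · rw [Finset.sum_update_of_mem (Finset.mem_univ i), Finset.sdiff_singleton_eq_erase]
      have := Finset.add_sum_erase Finset.univ μ (Finset.mem_univ i)
      omega
    · funext j
      by_cases hj : j = i
      · subst hj
        have hγj : γ j = μ j + ν j := congrFun hγ j
        simp only [Pi.add_apply, Function.update_self]
        omega
      · simp only [Pi.add_apply, Function.update_of_ne hj]
        exact congrFun hγ j

lemma exists_split (γ : Fin d → ℕ) (n : ℕ) (hγ : ∑ i, γ i = 2 * n + 1) :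
    ∃ (i : Fin d) (μ ν : Fin d → ℕ), (∑ j, μ j) = n ∧ (∑ j, ν j) = n ∧
      mono γ = MvPolynomial.X i * mono μ * mono ν := by
  obtain ⟨ε, ρ, hε, hγ'⟩ := exists_split_k 1 γ (by omega)
  have hsum : ∑ i, γ i = ∑ i, ε i + ∑ i, ρ i := by
    rw [hγ']; simp [Pi.add_apply, Finset.sum_add_distrib]
  have hρ : ∑ i, ρ i = 2 * n := by omega
  obtain ⟨μ, ν, hμ, hρ'⟩ := exists_split_k n ρ (by omega)
  have hν : ∑ i, ν i = n := by
    have : ∑ i, ρ i = ∑ i, μ i + ∑ i, ν i := by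
      rw [hρ']; simp [Pi.add_apply, Finset.sum_add_distrib]
    omega
  obtain ⟨i, hi⟩ : ∃ i, 0 < ε i := by
    by_contra h
    push_neg at h
    have : ∑ i, ε i = 0 := Finset.sum_eq_zero fun i _ => Nat.le_zero.1 (h i)
    omega
  have herase := Finset.add_sum_erase Finset.univ ε (Finset.mem_univ i)
  have hz : ∀ j ∈ Finset.univ.erase i, ε j = 0 := by
    rw [← Finset.sum_eq_zero_iff]
    omega
  have hmonoε : mono ε = MvPolynomial.X (R := ℝ) i := by
    have h1 : Finsupp.equivFunOnFinite.symm ε = Finsupp.single i 1 := by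
      ext j
      rw [show (Finsupp.equivFunOnFinite.symm ε) j = ε j from rfl, Finsupp.single_apply]
      by_cases hj : i = j
      · subst hj; rw [if_pos rfl]; omega
      · rw [if_neg hj]
        exact hz j (Finset.mem_erase.2 ⟨fun h => hj h.symm, Finset.mem_univ j⟩)
    rw [mono, h1, MvPolynomial.X]
  refine ⟨i, μ, ν, hμ, hν, ?_⟩
  rw [hγ', hρ', mono_add, mono_add, hmonoε, mul_assoc]

lemma sym_step
    (hL : ∀ p : MPoly d, p ≠ 0 → 0 < L (p * p)) (hspan : SpansPi P)
    (hdeg : ∀ n (α : Idx d n), (P n α).totalDegree = n)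
    (hon : ∀ n (α β : Idx d n), L (P n α * P n β) = if α = β then 1 else 0)
    (hoff : ∀ n m : ℕ, n ≠ m → ∀ (α : Idx d n) (β : Idx d m), L (P n α * P m β) = 0)
    (hB : ∀ (n : ℕ) (i : Fin d), Bmat L P n i = 0) (n : ℕ)
    (hH : ∀ m, m ≤ n → ∀ (α : Idx d m), ∀ μ ∈ (P m α).support, degS μ % 2 = m % 2)
    (hsym : ∀ γ : Fin d → ℕ, Odd (∑ i, γ i) → (∑ i, γ i) ≤ 2 * n → L (mono γ) = 0) :
    ∀ γ : Fin d → ℕ, Odd (∑ i, γ i) → (∑ i, γ i) ≤ 2 * n + 1 → L (mono γ) = 0 := by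
  intro γ hγodd hγle
  by_cases hlow : (∑ i, γ i) ≤ 2 * n
  · exact hsym γ hγodd hlow
  have hγn : ∑ i, γ i = 2 * n + 1 := by omega
  obtain ⟨i, μ, ν, hμ, hν, hsplit⟩ := exists_split γ n hγn
  -- expansion of mono ν
  have hexpν : mono ν = ∑ m ∈ Finset.range (n+1), ∑ β : Idx d m, L (mono ν * P m β) • P m β :=
    expansion L P hL hspan hdeg hon hoff (mono ν) (by rw [totalDegree_mono, hν])
  have key : ∀ m ∈ Finset.range (n+1), ∀ β : Idx d m,
      L (mono ν * P m β) * L (MvPolynomial.X i * mono μ * P m β) = 0 := by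
    intro m hm β
    have hmn : m ≤ n := Nat.lt_succ_iff.1 (Finset.mem_range.1 hm)
    by_cases hpar : m % 2 = n % 2
    · -- second factor vanishes
      have hexpμ : mono μ = ∑ m' ∈ Finset.range (n+1), ∑ α : Idx d m',
          L (mono μ * P m' α) • P m' α :=
        expansion L P hL hspan hdeg hon hoff (mono μ) (by rw [totalDegree_mono, hμ])
      have hpoly : MvPolynomial.X i * mono μ * P m β =
          ∑ m' ∈ Finset.range (n+1), ∑ α : Idx d m',
            L (mono μ * P m' α) • (MvPolynomial.X i * P m' α * P m β) := by
        conv_lhs => rw [hexpμ]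
        rw [Finset.mul_sum, Finset.sum_mul]
        refine Finset.sum_congr rfl fun m' _ => ?_
        rw [Finset.mul_sum, Finset.sum_mul]
        refine Finset.sum_congr rfl fun α _ => ?_
        rw [mul_smul_comm, smul_mul_assoc]
      have hzero : L (MvPolynomial.X i * mono μ * P m β) = 0 := by
        rw [hpoly, map_sum]
        refine Finset.sum_eq_zero fun m' hm' => ?_
        rw [map_sum]
        refine Finset.sum_eq_zero fun α _ => ?_
        rw [LinearMap.map_smul, smul_eq_mul]
        have hm'n : m' ≤ n := Nat.lt_succ_iff.1 (Finset.mem_range.1 hm')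
        by_cases hpar' : m' % 2 = n % 2
        · -- second factor zero via B or orth_lower
          rcases lt_trichotomy m' m with hlt | heq | hgt
          · have h2 : m' + 2 ≤ m := by omega
            have : L (MvPolynomial.X i * P m' α * P m β) = 0 := by
              rw [show MvPolynomial.X i * P m' α * P m β
                  = P m β * (MvPolynomial.X i * P m' α) by ring]
              refine orth_lower L P hspan hoff m β _ (Or.inr ?_)
              refine lt_of_le_of_lt (le_trans (MvPolynomial.totalDegree_mul _ _) ?_)
                (show 1 + m' < m by omega)
              rw [MvPolynomial.totalDegree_X, hdeg]
            rw [this, mul_zero]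
          · subst heq
            have hBe : L (MvPolynomial.X i * P m' α * P m' β) = 0 := by
              have h0 : Bmat L P m' i α β = L (MvPolynomial.X i * P m' α * P m' β) := rfl
              rw [← h0, hB m' i]
              rfl
            rw [hBe, mul_zero]
          · have h2 : m + 2 ≤ m' := by omega
            have : L (MvPolynomial.X i * P m' α * P m β) = 0 := by
              rw [show MvPolynomial.X i * P m' α * P m β
                  = P m' α * (MvPolynomial.X i * P m β) by ring]
              refine orth_lower L P hspan hoff m' α _ (Or.inr ?_)
              refine lt_of_le_of_lt (le_trans (MvPolynomial.totalDegree_mul _ _) ?_)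
                (show 1 + m < m' by omega)
              rw [MvPolynomial.totalDegree_X, hdeg]
            rw [this, mul_zero]
        · -- first factor (coefficient) zero by parity
          have : L (mono μ * P m' α) = 0 := by
            refine kill_odd L (D := 2 * n) hsym _ ?_ ?_
            · intro ρ hρ
              have := support_mul_parity (mono_parity μ) (hH m' hm'n α) ρ hρ
              rw [Nat.odd_iff, hμ] at *
              omega
            · refine le_trans (MvPolynomial.totalDegree_mul _ _) ?_
              rw [totalDegree_mono, hμ, hdeg]
              omega
          rw [this, zero_mul]
      rw [hzero, mul_zero]
    · -- coefficient vanishes by parity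
      have : L (mono ν * P m β) = 0 := by
        refine kill_odd L (D := 2 * n) hsym _ ?_ ?_
        · intro ρ hρ
          have := support_mul_parity (mono_parity ν) (hH m hmn β) ρ hρ
          rw [Nat.odd_iff, hν] at *
          omega
        · refine le_trans (MvPolynomial.totalDegree_mul _ _) ?_
          rw [totalDegree_mono, hν, hdeg]
          omega
      rw [this, zero_mul]
  calc L (mono γ) = L (MvPolynomial.X i * mono μ * mono ν) := by rw [hsplit]
    _ = ∑ m ∈ Finset.range (n+1), ∑ β : Idx d m,
        L (mono ν * P m β) * L (MvPolynomial.X i * mono μ * P m β) := by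
        conv_lhs => rw [hexpν]
        rw [Finset.mul_sum, map_sum]
        refine Finset.sum_congr rfl fun m _ => ?_
        rw [Finset.mul_sum, map_sum]
        refine Finset.sum_congr rfl fun β _ => ?_
        rw [mul_smul_comm, LinearMap.map_smul, smul_eq_mul]
    _ = 0 := Finset.sum_eq_zero fun m hm => Finset.sum_eq_zero fun β _ => key m hm β

lemma main_ind
    (hL : ∀ p : MPoly d, p ≠ 0 → 0 < L (p * p)) (hspan : SpansPi P)
    (hdeg : ∀ n (α : Idx d n), (P n α).totalDegree = n)
    (hon : ∀ n (α β : Idx d n), L (P n α * P n β) = if α = β then 1 else 0)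
    (hoff : ∀ n m : ℕ, n ≠ m → ∀ (α : Idx d n) (β : Idx d m), L (P n α * P m β) = 0)
    (hB : ∀ (n : ℕ) (i : Fin d), Bmat L P n i = 0) : ∀ n : ℕ,
    (∀ m, m ≤ n → ∀ (α : Idx d m), ∀ μ ∈ (P m α).support, degS μ % 2 = m % 2) ∧
    (∀ γ : Fin d → ℕ, Odd (∑ i, γ i) → (∑ i, γ i) ≤ 2 * n → L (mono γ) = 0) := by
  intro n
  induction n with
  | zero =>
    constructor
    · intro m hm α μ hμ
      have hm0 : m = 0 := Nat.le_zero.1 hm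
      subst hm0
      have h1 : degS μ ≤ 0 := le_trans (degS_le_totalDegree hμ) (le_of_eq (hdeg 0 α))
      omega
    · intro γ hγ hγle
      rw [Nat.odd_iff] at hγ
      omega
  | succ n ih =>
    have hsym' := sym_step L P hL hspan hdeg hon hoff hB n ih.1 ih.2
    have hH' : ∀ m, m ≤ n + 1 → ∀ (α : Idx d m), ∀ μ ∈ (P m α).support,
        degS μ % 2 = m % 2 := by
      intro m hm α
      by_cases hm' : m ≤ n
      · exact ih.1 m hm' α
      · have hmeq : m = n + 1 := by omega
        subst hmeq
        refine purity_of_orth L hL (n := n + 1) ?_ (le_of_eq (hdeg (n+1) α))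
          (orth_lower L P hspan hoff (n+1) α)
        intro γ hγ hγle
        exact hsym' γ hγ (by omega)
    refine ⟨hH', fun γ hγ hγle => hsym' γ hγ ?_⟩
    rw [Nat.odd_iff] at hγ
    omega

end CSaux

/-- `L` is centrally symmetric iff all matrices `B_{n,i}` of the three-term relation of an
orthonormal family vanish; and if `L` is centrally symmetric then every orthogonal polynomial
of degree `n` only involves monomials of total degree congruent to `n` mod 2. -/
theorem centrally_symmetric_iff_B_eq_zero
    (L : MPoly d →ₗ[ℝ] ℝ)
    (hL : ∀ p : MPoly d, p ≠ 0 → 0 < L (p * p))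
    (P : ∀ n, Idx d n → MPoly d)
    (hdeg : ∀ n (α : Idx d n), (P n α).totalDegree = n)
    (hspan : SpansPi P)
    (hon : ∀ n (α β : Idx d n), L (P n α * P n β) = if α = β then 1 else 0)
    (hoff : ∀ n m : ℕ, n ≠ m → ∀ (α : Idx d n) (β : Idx d m), L (P n α * P m β) = 0) :
    ((∀ α : Fin d → ℕ, Odd (∑ i, α i) → L (mono α) = 0) ↔
      ∀ (n : ℕ) (i : Fin d), Bmat L P n i = 0) ∧
    ((∀ α : Fin d → ℕ, Odd (∑ i, α i) → L (mono α) = 0) →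
      ∀ (n : ℕ) (Q : MPoly d), Q.totalDegree = n →
        (∀ R : MPoly d, IsDegLt R n → L (Q * R) = 0) →
        ∀ m ∈ Q.support, (∑ i, m i) % 2 = n % 2) := by
  classical
  have full_purity : (∀ α : Fin d → ℕ, Odd (∑ i, α i) → L (mono α) = 0) →
      ∀ (n : ℕ) (Q : MPoly d), Q.totalDegree = n →
        (∀ R : MPoly d, IsDegLt R n → L (Q * R) = 0) →
        ∀ m ∈ Q.support, (∑ i, m i) % 2 = n % 2 := by
    intro hCS n Q hQdeg horth
    exact CSaux.purity_of_orth L hL (n := n) (fun γ hγ _ => hCS γ hγ) (le_of_eq hQdeg) horth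
  refine ⟨⟨?_, ?_⟩, full_purity⟩
  · intro hCS n i
    have hpur : ∀ k (α : Idx d k), ∀ μ ∈ (P k α).support, CSaux.degS μ % 2 = k % 2 :=
      fun k α => full_purity hCS k (P k α) (hdeg k α)
        (CSaux.orth_lower L P hspan hoff k α)
    ext α β
    show L (X i * P n α * P n β) = 0
    refine CSaux.kill_odd L (D := (X i * P n α * P n β).totalDegree)
      (fun γ hγ _ => hCS γ hγ) _ ?_ le_rfl
    intro μ hμ
    have := CSaux.support_mul_parity
      (CSaux.support_mul_parity (CSaux.X_parity i) (hpur n α)) (hpur n β) μ hμ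
    rw [Nat.odd_iff]
    omega
  · intro hB α hodd
    exact (CSaux.main_ind L P hL hspan hdeg hon hoff hB (∑ i, α i)).2 α hodd (by omega)
end
end

section
/- Let L be a positive definite moment functional on real polynomials in d variables, {ℙ_k} an orthonormal family with three-term coefficient matrices A_{k,i} = L(x_i ℙ_k ℙ_{k+1}ᵀ) and B_{k,i} = L(x_i ℙ_k ℙ_kᵀ). For n ≥ 1 and 1 ≤ i ≤ d let J_{n,i} be the symmetric truncated block Jacobi matrix of order N = dim Π_{n−1}^d, block tridiagonal with diagonal blocks B_{0,i}, B_{1,i}, …, B_{n−1,i} and super/sub-diagonal blocks A_{k,i} and A_{k,i}ᵀ (0 ≤ k ≤ n−2). Then a point λ ∈ ℝ^d is a common zero of ℙ_n (i.e. P_α^n(λ) = 0 for all |α| = n) if and only if λ is a joint eigenvalue of J_{n,1}, …, J_{n,d}, i.e. there exists ξ ∈ ℝ^N, ξ ≠ 0, with J_{n,i} ξ = λ_i ξ for all 1 ≤ i ≤ d; moreover, in that case the vector ξ = (ℙ_0ᵀ(λ), ℙ_1ᵀ(λ), …, ℙ_{n−1}ᵀ(λ))ᵀ is such a joint eigenvector.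 -/
open MvPolynomial Matrix MeasureTheory

noncomputable section

variable {d : ℕ}

/-- Index set for the truncated block Jacobi matrix `J_{n,i}`: all multi-indices of total
degree `< n`; its cardinality is `N = dim Π_{n-1}^d`. -/
abbrev JacIdx (d n : ℕ) : Type := Σ k : Fin n, Idx d (k : ℕ)

/-- The action `ξ ↦ J_{n,i} ξ` of the truncated block Jacobi matrix: block tridiagonal with
diagonal blocks `B_{k,i}`, superdiagonal blocks `A_{k,i}` and subdiagonal blocks `A_{k-1,i}ᵀ`. -/
noncomputable def jacMulVec (n : ℕ)
    (A : ∀ k : ℕ, Fin d → Matrix (Idx d k) (Idx d (k+1)) ℝ)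
    (B : ∀ k : ℕ, Fin d → Matrix (Idx d k) (Idx d k) ℝ)
    (i : Fin d) (ξ : JacIdx d n → ℝ) : JacIdx d n → ℝ :=
  fun p =>
    (∑ β : Idx d (p.1 : ℕ), B (p.1 : ℕ) i p.2 β * ξ ⟨p.1, β⟩) +
    (if h : ((p.1 : ℕ) + 1) < n then
      ∑ β : Idx d ((p.1 : ℕ) + 1), A (p.1 : ℕ) i p.2 β * ξ ⟨⟨(p.1 : ℕ) + 1, h⟩, β⟩
    else 0) +
    (if h : 0 < (p.1 : ℕ) then
      ∑ β : Idx d ((p.1 : ℕ) - 1),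
        A ((p.1 : ℕ) - 1) i β ⟨p.2.1, by have := p.2.2; omega⟩ *
          ξ ⟨⟨(p.1 : ℕ) - 1, by have := p.1.isLt; omega⟩, β⟩
    else 0)

namespace CZJE

open Finset

lemma lowsum {M : Type*} [AddCommMonoid M] (k : ℕ) (g : ℕ → M)
    (hg : ∀ j, j + 1 < k → g j = 0) :
    ∑ j ∈ Finset.range k, g j = if 0 < k then g (k - 1) else 0 := by
  cases k with
  | zero => simp
  | succ m =>
    rw [Finset.sum_range_succ,
      Finset.sum_eq_zero (fun j hj => hg j (by have := Finset.mem_range.mp hj; omega))]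
    simp

lemma sum_tridiag (n k : ℕ) (hk : k < n) (g : ℕ → ℝ)
    (hlow : ∀ j, j + 1 < k → g j = 0) (hhigh : ∀ j, k + 1 < j → g j = 0) :
    ∑ j ∈ Finset.range n, g j =
      g k + (if k + 1 < n then g (k + 1) else 0) + (if 0 < k then g (k - 1) else 0) := by
  by_cases h : k + 1 < n
  · have h1 : ∑ j ∈ Finset.range n, g j = ∑ j ∈ Finset.range (k + 2), g j := by
      rw [Finset.sum_subset (Finset.range_subset_range.mpr (by omega : k + 2 ≤ n))]
      intro x hx hx2
      exact hhigh x (by simp only [Finset.mem_range] at hx hx2; omega)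
    rw [h1, Finset.sum_range_succ, Finset.sum_range_succ, lowsum k g hlow, if_pos h]
    ring
  · have hn : n = k + 1 := by omega
    subst hn
    rw [Finset.sum_range_succ, lowsum k g hlow, if_neg h]
    ring

variable {d : ℕ} (L : MPoly d →ₗ[ℝ] ℝ) (P : ∀ n, Idx d n → MPoly d)

lemma exists_rep (hspan : SpansPi P) (m : ℕ) (r : MPoly d) (h : r.totalDegree ≤ m) :
    ∃ c : (Σ j : Fin (m + 1), Idx d (j : ℕ)) → ℝ, ∑ p, c p • P (p.1 : ℕ) p.2 = r := by
  have hmem : r ∈ Submodule.span ℝ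
      (Set.range (fun p : (Σ j : Fin (m + 1), Idx d (j : ℕ)) => P (p.1 : ℕ) p.2)) := by
    have hset : Set.range (fun p : (Σ j : Fin (m + 1), Idx d (j : ℕ)) => P (p.1 : ℕ) p.2) =
        {p | ∃ k, k ≤ m ∧ ∃ α : Idx d k, p = P k α} := by
      ext x
      constructor
      · rintro ⟨⟨j, α⟩, rfl⟩
        exact ⟨j, Nat.lt_succ_iff.mp j.isLt, α, rfl⟩
      · rintro ⟨k, hk, α, rfl⟩
        exact ⟨⟨⟨k, Nat.lt_succ_of_le hk⟩, α⟩, rfl⟩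
    rw [hset, hspan m]
    exact (MvPolynomial.mem_restrictTotalDegree _ _ _).mpr h
  exact (Submodule.mem_span_range_iff_exists_fun ℝ).mp hmem

lemma orth_lower (hspan : SpansPi P)
    (hoff : ∀ n m : ℕ, n ≠ m → ∀ (α : Idx d n) (β : Idx d m), L (P n α * P m β) = 0)
    {k m : ℕ} (hm : m < k) (α : Idx d k) (r : MPoly d) (h : r.totalDegree ≤ m) :
    L (r * P k α) = 0 := by
  obtain ⟨c, hc⟩ := exists_rep P hspan m r h
  rw [← hc, Finset.sum_mul, map_sum]
  refine Finset.sum_eq_zero fun p _ => ?_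
  rw [smul_mul_assoc, LinearMap.map_smul,
    hoff (p.1 : ℕ) k (by have := p.1.isLt; omega) p.2 α, smul_zero]

lemma orth_far (hdeg : ∀ n (α : Idx d n), (P n α).totalDegree = n) (hspan : SpansPi P)
    (hoff : ∀ n m : ℕ, n ≠ m → ∀ (α : Idx d n) (β : Idx d m), L (P n α * P m β) = 0)
    {k m : ℕ} (i : Fin d) (α : Idx d k) (β : Idx d m)
    (h : k + 1 < m ∨ m + 1 < k) : L (X i * P k α * P m β) = 0 := by
  rcases h with h | h
  · exact orth_lower L P hspan hoff h β _
      (le_trans (totalDegree_mul _ _) (by rw [totalDegree_X, hdeg]; omega))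
  · have e : X i * P k α * P m β = (X i * P m β) * P k α := by ring
    rw [e]
    exact orth_lower L P hspan hoff h α _
      (le_trans (totalDegree_mul _ _) (by rw [totalDegree_X, hdeg]; omega))

lemma coeff_extract
    (hon : ∀ n (α β : Idx d n), L (P n α * P n β) = if α = β then 1 else 0)
    (hoff : ∀ n m : ℕ, n ≠ m → ∀ (α : Idx d n) (β : Idx d m), L (P n α * P m β) = 0)
    {N : ℕ} (c : (Σ j : Fin N, Idx d (j : ℕ)) → ℝ) (j : Fin N) (γ : Idx d (j : ℕ)) :
    L ((∑ p, c p • P (p.1 : ℕ) p.2) * P (j : ℕ) γ) = c ⟨j, γ⟩ := by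
  rw [Finset.sum_mul, map_sum]
  have key : ∀ p : (Σ j : Fin N, Idx d (j : ℕ)), p ∈ Finset.univ →
      L (c p • P (p.1 : ℕ) p.2 * P (j : ℕ) γ) = if p = ⟨j, γ⟩ then c p else 0 := by
    rintro ⟨j', γ'⟩ -
    rw [smul_mul_assoc, LinearMap.map_smul]
    by_cases hj : j' = j
    · subst hj
      rw [hon]
      by_cases hγ : γ' = γ
      · subst hγ; simp
      · rw [if_neg hγ, if_neg (by simp [hγ]), smul_zero]
    · rw [hoff (j' : ℕ) (j : ℕ) (fun hh => hj (Fin.val_injective hh)) γ' γ, smul_zero,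
        if_neg (by rintro h; exact hj (Sigma.mk.inj_iff.mp h).1)]
  rw [Finset.sum_congr rfl key, Finset.sum_ite_eq' Finset.univ (⟨j, γ⟩ : Σ j : Fin N, Idx d (j : ℕ)) c]
  simp

/-- The `j`-th block contribution in the expansion of `x_i P_k^α`. -/
def Gfun (lam : Fin d → ℝ) (k : ℕ) (i : Fin d) (α : Idx d k) (j : ℕ) : ℝ :=
  ∑ γ : Idx d j, L (X i * P k α * P j γ) * eval lam (P j γ)

lemma expand_eval (hdeg : ∀ n (α : Idx d n), (P n α).totalDegree = n) (hspan : SpansPi P)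
    (hon : ∀ n (α β : Idx d n), L (P n α * P n β) = if α = β then 1 else 0)
    (hoff : ∀ n m : ℕ, n ≠ m → ∀ (α : Idx d n) (β : Idx d m), L (P n α * P m β) = 0)
    (lam : Fin d → ℝ) (k : ℕ) (i : Fin d) (α : Idx d k) :
    lam i * eval lam (P k α) = ∑ j ∈ Finset.range (k + 2), Gfun L P lam k i α j := by
  have hd : (X i * P k α).totalDegree ≤ k + 1 :=
    le_trans (totalDegree_mul _ _) (by rw [totalDegree_X, hdeg]; omega)
  obtain ⟨c, hc⟩ := exists_rep P hspan (k + 1) _ hd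
  have hcp : ∀ (j : Fin (k + 2)) (γ : Idx d (j : ℕ)),
      c ⟨j, γ⟩ = L (X i * P k α * P (j : ℕ) γ) := by
    intro j γ
    rw [← hc]
    exact (coeff_extract L P hon hoff c j γ).symm
  have he := congrArg (eval lam) hc
  rw [map_sum] at he
  simp only [smul_eval] at he
  rw [_root_.map_mul, eval_X] at he
  rw [← he, ← Finset.univ_sigma_univ, Finset.sum_sigma,
    ← Fin.sum_univ_eq_sum_range (fun j => Gfun L P lam k i α j) (k + 2)]
  refine Finset.sum_congr rfl fun j _ => ?_
  show _ = Gfun L P lam k i α (j : ℕ)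
  unfold Gfun
  exact Finset.sum_congr rfl fun γ _ => by rw [hcp]

lemma gfun_low (hdeg : ∀ n (α : Idx d n), (P n α).totalDegree = n) (hspan : SpansPi P)
    (hoff : ∀ n m : ℕ, n ≠ m → ∀ (α : Idx d n) (β : Idx d m), L (P n α * P m β) = 0)
    (lam : Fin d → ℝ) (k : ℕ) (i : Fin d) (α : Idx d k) (j : ℕ) (hj : j + 1 < k) :
    Gfun L P lam k i α j = 0 :=
  Finset.sum_eq_zero fun γ _ => by
    rw [orth_far L P hdeg hspan hoff i α γ (Or.inr hj), zero_mul]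

lemma three_term_zero (hdeg : ∀ n (α : Idx d n), (P n α).totalDegree = n) (hspan : SpansPi P)
    (hon : ∀ n (α β : Idx d n), L (P n α * P n β) = if α = β then 1 else 0)
    (hoff : ∀ n m : ℕ, n ≠ m → ∀ (α : Idx d n) (β : Idx d m), L (P n α * P m β) = 0)
    (lam : Fin d → ℝ) (i : Fin d) (α : Idx d 0) :
    lam i * eval lam (P 0 α) = Gfun L P lam 0 i α 0 + Gfun L P lam 0 i α 1 := by
  rw [expand_eval L P hdeg hspan hon hoff lam 0 i α]
  rw [show (0 + 2 : ℕ) = 2 from rfl, Finset.sum_range_succ, Finset.sum_range_succ,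
    Finset.sum_range_zero, zero_add]

lemma three_term_succ (hdeg : ∀ n (α : Idx d n), (P n α).totalDegree = n) (hspan : SpansPi P)
    (hon : ∀ n (α β : Idx d n), L (P n α * P n β) = if α = β then 1 else 0)
    (hoff : ∀ n m : ℕ, n ≠ m → ∀ (α : Idx d n) (β : Idx d m), L (P n α * P m β) = 0)
    (lam : Fin d → ℝ) (k' : ℕ) (i : Fin d) (α : Idx d (k' + 1)) :
    lam i * eval lam (P (k' + 1) α) =
      Gfun L P lam (k' + 1) i α (k' + 2) + Gfun L P lam (k' + 1) i α (k' + 1) +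
        Gfun L P lam (k' + 1) i α k' := by
  rw [expand_eval L P hdeg hspan hon hoff lam (k' + 1) i α]
  rw [show k' + 1 + 2 = (k' + 1) + 1 + 1 from rfl, Finset.sum_range_succ, Finset.sum_range_succ,
    lowsum (k' + 1) _ (fun j hj => gfun_low L P hdeg hspan hoff lam (k' + 1) i α j hj),
    if_pos (Nat.succ_pos k'), Nat.add_sub_cancel]
  ring

lemma jac_eval_zero (A : ∀ k : ℕ, Fin d → Matrix (Idx d k) (Idx d (k+1)) ℝ)
    (B : ∀ k : ℕ, Fin d → Matrix (Idx d k) (Idx d k) ℝ) (n : ℕ) (hk : 0 < n)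
    (i : Fin d) (lam : Fin d → ℝ) (α : Idx d 0) :
    jacMulVec n A B i (fun p => eval lam (P (p.1 : ℕ) p.2)) ⟨⟨0, hk⟩, α⟩ =
      (∑ β : Idx d 0, B 0 i α β * eval lam (P 0 β)) +
      (if _ : 1 < n then ∑ β : Idx d 1, A 0 i α β * eval lam (P 1 β) else 0) := by
  show _ + _ + _ = _
  rw [dif_neg (lt_irrefl 0), add_zero]

lemma jac_eval_succ (A : ∀ k : ℕ, Fin d → Matrix (Idx d k) (Idx d (k+1)) ℝ)
    (B : ∀ k : ℕ, Fin d → Matrix (Idx d k) (Idx d k) ℝ) (n k' : ℕ) (hk : k' + 1 < n)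
    (i : Fin d) (lam : Fin d → ℝ) (α : Idx d (k' + 1)) :
    jacMulVec n A B i (fun p => eval lam (P (p.1 : ℕ) p.2)) ⟨⟨k' + 1, hk⟩, α⟩ =
      (∑ β : Idx d (k' + 1), B (k' + 1) i α β * eval lam (P (k' + 1) β)) +
      (if _ : k' + 2 < n then ∑ β : Idx d (k' + 2), A (k' + 1) i α β * eval lam (P (k' + 2) β)
        else 0) +
      (∑ β : Idx d k', A k' i β α * eval lam (P k' β)) := by
  show _ + _ + _ = _ + _ + _
  rw [dif_pos (Nat.succ_pos k')]
  rfl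

lemma P0_eval_ne (hdeg : ∀ n (α : Idx d n), (P n α).totalDegree = n)
    (hon : ∀ n (α β : Idx d n), L (P n α * P n β) = if α = β then 1 else 0)
    (lam : Fin d → ℝ) (α : Idx d 0) : eval lam (P 0 α) ≠ 0 := by
  intro heval
  have h0 : (P 0 α).totalDegree = 0 := hdeg 0 α
  have hC : P 0 α = C (MvPolynomial.coeff 0 (P 0 α)) := by
    ext m
    rw [coeff_C]
    by_cases hm : 0 = m
    · rw [if_pos hm, ← hm]
    · rw [if_neg hm]
      by_contra hc
      have hmem : m ∈ (P 0 α).support := MvPolynomial.mem_support_iff.mpr hc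
      have hz := (totalDegree_eq_zero_iff _ (P 0 α)).mp h0 m hmem
      exact hm (Finsupp.ext hz).symm
  rw [hC, eval_C] at heval
  have hzero : P 0 α = 0 := by rw [hC, heval, map_zero]
  have h1 := hon 0 α α
  rw [hzero, mul_zero, map_zero, if_pos rfl] at h1
  exact zero_ne_one h1

lemma forward (hdeg : ∀ n (α : Idx d n), (P n α).totalDegree = n) (hspan : SpansPi P)
    (hon : ∀ n (α β : Idx d n), L (P n α * P n β) = if α = β then 1 else 0)
    (hoff : ∀ n m : ℕ, n ≠ m → ∀ (α : Idx d n) (β : Idx d m), L (P n α * P m β) = 0)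
    (A : ∀ k : ℕ, Fin d → Matrix (Idx d k) (Idx d (k+1)) ℝ)
    (B : ∀ k : ℕ, Fin d → Matrix (Idx d k) (Idx d k) ℝ)
    (hA : ∀ (k : ℕ) (i : Fin d) (α : Idx d k) (β : Idx d (k+1)),
      A k i α β = L (X i * P k α * P (k+1) β))
    (hB : ∀ (k : ℕ) (i : Fin d) (α β : Idx d k),
      B k i α β = L (X i * P k α * P k β))
    (n : ℕ) (lam : Fin d → ℝ)
    (hzero : ∀ α : Idx d n, eval lam (P n α) = 0) (i : Fin d) :
    jacMulVec n A B i (fun p => eval lam (P (p.1 : ℕ) p.2)) =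
      fun p => lam i * eval lam (P (p.1 : ℕ) p.2) := by
  funext p
  obtain ⟨⟨k, hk⟩, α⟩ := p
  cases k with
  | zero =>
    show _ = lam i * eval lam (P 0 α)
    rw [jac_eval_zero P A B n hk i lam α,
      three_term_zero L P hdeg hspan hon hoff lam i α]
    have e0 : Gfun L P lam 0 i α 0 = ∑ β : Idx d 0, B 0 i α β * eval lam (P 0 β) :=
      Finset.sum_congr rfl fun β _ => by rw [hB]
    have e1 : Gfun L P lam 0 i α 1 = ∑ β : Idx d 1, A 0 i α β * eval lam (P 1 β) :=
      Finset.sum_congr rfl fun β _ => by rw [hA]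
    rw [e0, e1]
    by_cases h : 1 < n
    · rw [dif_pos h]
    · rw [dif_neg h]
      have hn1 : n = 1 := by omega
      subst hn1
      have hz : (∑ β : Idx d 1, A 0 i α β * eval lam (P 1 β)) = 0 :=
        Finset.sum_eq_zero fun β _ => by rw [hzero β, mul_zero]
      rw [hz]
  | succ k' =>
    show _ = lam i * eval lam (P (k' + 1) α)
    rw [jac_eval_succ P A B n k' hk i lam α,
      three_term_succ L P hdeg hspan hon hoff lam k' i α]
    have eA : Gfun L P lam (k' + 1) i α (k' + 2)
        = ∑ β : Idx d (k' + 2), A (k' + 1) i α β * eval lam (P (k' + 2) β) :=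
      Finset.sum_congr rfl fun β _ => by rw [hA]
    have eB : Gfun L P lam (k' + 1) i α (k' + 1)
        = ∑ β : Idx d (k' + 1), B (k' + 1) i α β * eval lam (P (k' + 1) β) :=
      Finset.sum_congr rfl fun β _ => by rw [hB]
    have eSub : Gfun L P lam (k' + 1) i α k'
        = ∑ β : Idx d k', A k' i β α * eval lam (P k' β) :=
      Finset.sum_congr rfl fun β _ => by
        rw [hA k' i β α, mul_right_comm (X i) (P (k' + 1) α) (P k' β)]
    rw [eA, eB, eSub]
    by_cases h : k' + 2 < n
    · rw [dif_pos h]; ring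
    · rw [dif_neg h]
      have hn1 : n = k' + 2 := by omega
      subst hn1
      have hz : (∑ β : Idx d (k' + 2), A (k' + 1) i α β * eval lam (P (k' + 2) β)) = 0 :=
        Finset.sum_eq_zero fun β _ => by rw [hzero β, mul_zero]
      rw [hz]
      ring

lemma jac_apply (A : ∀ k : ℕ, Fin d → Matrix (Idx d k) (Idx d (k+1)) ℝ)
    (B : ∀ k : ℕ, Fin d → Matrix (Idx d k) (Idx d k) ℝ) (n : ℕ)
    (i : Fin d) (ξ : JacIdx d n → ℝ) (j : Fin n) (γ : Idx d (j : ℕ)) :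
    jacMulVec n A B i ξ ⟨j, γ⟩ =
      (∑ β : Idx d (j : ℕ), B (j : ℕ) i γ β * ξ ⟨j, β⟩) +
      (if h : (j : ℕ) + 1 < n then
        ∑ β : Idx d ((j : ℕ) + 1), A (j : ℕ) i γ β * ξ ⟨⟨(j : ℕ) + 1, h⟩, β⟩ else 0) +
      (if h : 0 < (j : ℕ) then
        ∑ β : Idx d ((j : ℕ) - 1),
          A ((j : ℕ) - 1) i β ⟨γ.1, by have := γ.2; omega⟩ *
            ξ ⟨⟨(j : ℕ) - 1, by have := j.isLt; omega⟩, β⟩ else 0) := rfl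

lemma A_sub (A' : ∀ k : ℕ, Fin d → Matrix (Idx d k) (Idx d (k+1)) ℝ)
    (hA : ∀ (k : ℕ) (i : Fin d) (α : Idx d k) (β : Idx d (k+1)),
      A' k i α β = L (X i * P k α * P (k+1) β))
    (k : ℕ) (hk : 0 < k) (i : Fin d) (γ : Idx d k) (β : Idx d (k - 1))
    (pf : ∑ x, γ.1 x = (k - 1) + 1) :
    A' (k - 1) i β ⟨γ.1, pf⟩ = L (X i * P k γ * P (k - 1) β) := by
  obtain ⟨k'', rfl⟩ : ∃ m, k = m + 1 := ⟨k - 1, by omega⟩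
  show A' k'' i β ⟨γ.1, pf⟩ = L (X i * P (k'' + 1) γ * P k'' β)
  rw [hA k'' i β ⟨γ.1, pf⟩]
  have hg : (⟨γ.1, pf⟩ : Idx d (k'' + 1)) = γ := Subtype.ext rfl
  rw [hg, mul_right_comm]

lemma converse (hL : ∀ p : MPoly d, p ≠ 0 → 0 < L (p * p))
    (hdeg : ∀ n (α : Idx d n), (P n α).totalDegree = n) (hspan : SpansPi P)
    (hon : ∀ n (α β : Idx d n), L (P n α * P n β) = if α = β then 1 else 0)
    (hoff : ∀ n m : ℕ, n ≠ m → ∀ (α : Idx d n) (β : Idx d m), L (P n α * P m β) = 0)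
    (A : ∀ k : ℕ, Fin d → Matrix (Idx d k) (Idx d (k+1)) ℝ)
    (B : ∀ k : ℕ, Fin d → Matrix (Idx d k) (Idx d k) ℝ)
    (hA : ∀ (k : ℕ) (i : Fin d) (α : Idx d k) (β : Idx d (k+1)),
      A k i α β = L (X i * P k α * P (k+1) β))
    (hB : ∀ (k : ℕ) (i : Fin d) (α β : Idx d k),
      B k i α β = L (X i * P k α * P k β))
    (n : ℕ) (hn : 1 ≤ n) (lam : Fin d → ℝ)
    (ξ : JacIdx d n → ℝ) (hξ : ξ ≠ 0)
    (heig : ∀ i : Fin d, jacMulVec n A B i ξ = fun p => lam i * ξ p) :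
    ∀ α : Idx d n, eval lam (P n α) = 0 := by
  classical
  set q : MPoly d := ∑ p : JacIdx d n, ξ p • P (p.1 : ℕ) p.2 with hqdef
  have hq : ∀ (j : Fin n) (γ : Idx d (j : ℕ)), L (q * P (j : ℕ) γ) = ξ ⟨j, γ⟩ := by
    intro j γ
    rw [hqdef]
    exact coeff_extract L P hon hoff ξ j γ
  -- Step B : the eigenvector equations give the action of multiplication by `x_i` against `q`.
  have hXPq : ∀ (i : Fin d) (j : Fin n) (γ : Idx d (j : ℕ)),
      L (X i * P (j : ℕ) γ * q) = lam i * ξ ⟨j, γ⟩ := by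
    intro i j γ
    set g : ℕ → ℝ := fun m => if h : m < n then
        ∑ β : Idx d m, L (X i * P (j : ℕ) γ * P m β) * ξ ⟨⟨m, h⟩, β⟩ else 0 with hgdef
    have expand : L (X i * P (j : ℕ) γ * q) = ∑ m ∈ Finset.range n, g m := by
      rw [hqdef, Finset.mul_sum, map_sum, ← Finset.univ_sigma_univ, Finset.sum_sigma,
        ← Fin.sum_univ_eq_sum_range g n]
      refine Finset.sum_congr rfl fun m _ => ?_
      rw [hgdef]
      simp only [dif_pos m.isLt, Fin.eta]
      refine Finset.sum_congr rfl fun β _ => ?_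
      rw [mul_smul_comm, LinearMap.map_smul, smul_eq_mul, mul_comm]
    have hlow : ∀ m, m + 1 < (j : ℕ) → g m = 0 := by
      intro m hm
      by_cases h : m < n
      · simp only [hgdef, dif_pos h]
        exact Finset.sum_eq_zero fun β _ => by
          rw [orth_far L P hdeg hspan hoff i γ β (Or.inr hm), zero_mul]
      · simp only [hgdef, dif_neg h]
    have hhigh : ∀ m, (j : ℕ) + 1 < m → g m = 0 := by
      intro m hm
      by_cases h : m < n
      · simp only [hgdef, dif_pos h]
        exact Finset.sum_eq_zero fun β _ => by
          rw [orth_far L P hdeg hspan hoff i γ β (Or.inl hm), zero_mul]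
      · simp only [hgdef, dif_neg h]
    have hjac := congrFun (heig i) ⟨j, γ⟩
    rw [jac_apply A B n i ξ j γ] at hjac
    have c1 : g (j : ℕ) = ∑ β : Idx d (j : ℕ), B (j : ℕ) i γ β * ξ ⟨j, β⟩ := by
      rw [hgdef]
      simp only [dif_pos j.isLt, Fin.eta]
      exact Finset.sum_congr rfl fun β _ => by rw [hB (j : ℕ) i γ β, mul_comm]
    have c2 : (if (j : ℕ) + 1 < n then g ((j : ℕ) + 1) else 0) =
        (if h : (j : ℕ) + 1 < n then
          ∑ β : Idx d ((j : ℕ) + 1), A (j : ℕ) i γ β * ξ ⟨⟨(j : ℕ) + 1, h⟩, β⟩ else 0) := by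
      by_cases h : (j : ℕ) + 1 < n
      · rw [if_pos h, dif_pos h, hgdef]
        simp only [dif_pos h]
        exact Finset.sum_congr rfl fun β _ => by rw [hA (j : ℕ) i γ β, mul_comm]
      · rw [if_neg h, dif_neg h]
    have c3 : (if 0 < (j : ℕ) then g ((j : ℕ) - 1) else 0) =
        (if h : 0 < (j : ℕ) then
          ∑ β : Idx d ((j : ℕ) - 1),
            A ((j : ℕ) - 1) i β ⟨γ.1, by have := γ.2; omega⟩ *
              ξ ⟨⟨(j : ℕ) - 1, by have := j.isLt; omega⟩, β⟩ else 0) := by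
      by_cases h : 0 < (j : ℕ)
      · rw [if_pos h, dif_pos h, hgdef]
        simp only [dif_pos (show (j : ℕ) - 1 < n by have := j.isLt; omega)]
        refine Finset.sum_congr rfl fun β _ => ?_
        rw [A_sub L P A hA (j : ℕ) h i γ β, mul_comm]
      · rw [if_neg h, dif_neg h]
    rw [expand, sum_tridiag n (j : ℕ) j.isLt g hlow hhigh, c1, c2, c3]
    exact hjac
  have hXPq2 : ∀ (i : Fin d) (k : ℕ) (hk : k < n) (γ : Idx d k),
      L (X i * P k γ * q) = lam i * L (P k γ * q) := by
    intro i k hk γ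
    rw [mul_comm (P k γ) q, hXPq i ⟨k, hk⟩ γ, hq ⟨k, hk⟩ γ]
  -- Step C : `L ((x_i - λ_i) r q) = 0` for all `r` of degree `< n`.
  have hXrq : ∀ (i : Fin d) (m : ℕ), m < n → ∀ r : MPoly d, r.totalDegree ≤ m →
      L (X i * r * q) = lam i * L (r * q) := by
    intro i m hm r hr
    obtain ⟨c, hc⟩ := exists_rep P hspan m r hr
    rw [← hc]
    simp only [Finset.mul_sum, Finset.sum_mul, mul_smul_comm, smul_mul_assoc,
      LinearMap.map_smul, map_sum, smul_eq_mul]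
    refine Finset.sum_congr rfl fun p _ => ?_
    rw [hXPq2 i (p.1 : ℕ) (by have := p.1.isLt; omega) p.2]
    ring
  -- Step D : `L (x^u q) = λ^u L q` for monomials of degree at most `n`.
  have hmono : ∀ N : ℕ, N ≤ n → ∀ u : Fin d →₀ ℕ, (u.sum fun _ e => e) = N →
      L ((monomial u (1 : ℝ)) * q) = eval lam (monomial u (1 : ℝ)) * L (1 * q) := by
    intro N
    induction N with
    | zero =>
      intro _ u hu
      have hu0 : u = 0 := by
        by_contra h0
        obtain ⟨x, hxs⟩ := Finsupp.support_nonempty_iff.mpr h0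
        have hxne : u x ≠ 0 := Finsupp.mem_support_iff.mp hxs
        have hle : u x ≤ ∑ a ∈ u.support, u a :=
          Finset.single_le_sum (fun a _ => Nat.zero_le (u a)) hxs
        have heq : (u.sum fun _ e => e) = ∑ a ∈ u.support, u a := rfl
        omega
      subst hu0
      rw [monomial_zero', C_1, one_mul, (eval lam).map_one, one_mul]
    | succ N ih =>
      intro hNn u hu
      have hne : u ≠ 0 := by
        intro h0
        rw [h0, Finsupp.sum_zero_index] at hu
        omega
      obtain ⟨i, hi⟩ := Finsupp.support_nonempty_iff.mpr hne
      have hine : u i ≠ 0 := Finsupp.mem_support_iff.mp hi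
      have hle : Finsupp.single i 1 ≤ u := Finsupp.single_le_iff.mpr (by omega)
      have hu' : u - Finsupp.single i 1 + Finsupp.single i 1 = u := tsub_add_cancel_of_le hle
      set u' := u - Finsupp.single i 1 with hu'def
      have hu2 : Finsupp.single i 1 + u' = u := by rw [add_comm]; exact hu'
      have hsum' : (u'.sum fun _ e => e) = N := by
        have hs := Finsupp.sum_add_index' (f := u') (g := Finsupp.single i 1)
          (h := fun (_ : Fin d) (e : ℕ) => e) (fun _ => rfl) (fun _ _ _ => rfl)
        rw [hu', hu] at hs
        have hsingle : ((Finsupp.single i 1).sum fun _ e => e) = 1 :=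
          Finsupp.sum_single_index rfl
        omega
      have hfac : (monomial u (1 : ℝ)) = X i * monomial u' 1 := by
        rw [← hu2, monomial_single_add, pow_one]
      have hdeg' : (monomial u' (1 : ℝ)).totalDegree ≤ N := by
        rw [totalDegree_monomial u' (one_ne_zero : (1:ℝ) ≠ 0), hsum']
      have hev : eval lam (monomial u (1 : ℝ)) = lam i * eval lam (monomial u' 1) := by
        rw [hfac, _root_.map_mul, eval_X]
      rw [hfac, hXrq i N (by omega) _ hdeg', ih (by omega) u' hsum', ← hfac, hev]
      ring
  -- Step E : `L (s q) = s(λ) L q` for every `s` of degree at most `n`.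
  have hagree : ∀ s : MPoly d, s.totalDegree ≤ n → L (s * q) = eval lam s * L (1 * q) := by
    intro s hs
    conv_lhs => rw [s.as_sum]
    conv_rhs => rw [s.as_sum]
    rw [Finset.sum_mul, map_sum, map_sum, Finset.sum_mul]
    refine Finset.sum_congr rfl fun v hv => ?_
    have hv' : (v.sum fun _ e => e) ≤ n := le_trans (le_totalDegree hv) hs
    have hsm : monomial v (MvPolynomial.coeff v s) =
        (MvPolynomial.coeff v s) • monomial v (1 : ℝ) := by
      rw [smul_monomial, smul_eq_mul, mul_one]
    rw [hsm, smul_mul_assoc, LinearMap.map_smul, smul_eq_mul,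
      hmono _ hv' v rfl, smul_eval]
    ring
  -- `q ≠ 0`, hence `L q ≠ 0`.
  have hq_ne : q ≠ 0 := by
    intro h0
    apply hξ
    funext p
    have hp := hq p.1 p.2
    rw [h0, zero_mul, map_zero] at hp
    exact hp.symm
  have hdq : q.totalDegree ≤ n := by
    rw [hqdef]
    refine le_trans (totalDegree_finset_sum _ _) (Finset.sup_le fun p _ => ?_)
    refine le_trans (totalDegree_smul_le _ _) ?_
    rw [hdeg]
    have := p.1.isLt
    omega
  have hqq : 0 < L (q * q) := hL q hq_ne
  have hEq : L (q * q) = eval lam q * L (1 * q) := hagree q hdq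
  have hLq_ne : L (1 * q) ≠ 0 := by
    intro h0
    rw [h0, mul_zero] at hEq
    exact absurd hEq (ne_of_gt hqq)
  intro α
  have h1 : L (P n α * q) = eval lam (P n α) * L (1 * q) := hagree _ (le_of_eq (hdeg n α))
  have h2 : L (P n α * q) = 0 := by
    rw [hqdef, Finset.mul_sum, map_sum]
    refine Finset.sum_eq_zero fun p _ => ?_
    rw [mul_smul_comm, LinearMap.map_smul, smul_eq_mul,
      hoff n (p.1 : ℕ) (by have := p.1.isLt; omega) α p.2, mul_zero]
  rw [h2] at h1
  exact ((mul_eq_zero.mp h1.symm).resolve_right hLq_ne)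

end CZJE

/-- A point `λ ∈ ℝ^d` is a common zero of `ℙ_n` iff it is a joint eigenvalue of the truncated
block Jacobi matrices `J_{n,1}, …, J_{n,d}`; moreover, in that case
`ξ = (ℙ_0ᵀ(λ), …, ℙ_{n-1}ᵀ(λ))ᵀ` is a joint eigenvector. -/
theorem common_zero_iff_joint_eigenvalue
    (L : MPoly d →ₗ[ℝ] ℝ)
    (hL : ∀ p : MPoly d, p ≠ 0 → 0 < L (p * p))
    (P : ∀ n, Idx d n → MPoly d)
    (hdeg : ∀ n (α : Idx d n), (P n α).totalDegree = n)
    (hspan : SpansPi P)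
    (hon : ∀ n (α β : Idx d n), L (P n α * P n β) = if α = β then 1 else 0)
    (hoff : ∀ n m : ℕ, n ≠ m → ∀ (α : Idx d n) (β : Idx d m), L (P n α * P m β) = 0)
    (A : ∀ k : ℕ, Fin d → Matrix (Idx d k) (Idx d (k+1)) ℝ)
    (B : ∀ k : ℕ, Fin d → Matrix (Idx d k) (Idx d k) ℝ)
    (hA : ∀ (k : ℕ) (i : Fin d) (α : Idx d k) (β : Idx d (k+1)),
      A k i α β = L (X i * P k α * P (k+1) β))
    (hB : ∀ (k : ℕ) (i : Fin d) (α β : Idx d k),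
      B k i α β = L (X i * P k α * P k β))
    (n : ℕ) (hn : 1 ≤ n) (lam : Fin d → ℝ) :
    ((∀ α : Idx d n, eval lam (P n α) = 0) ↔
      ∃ ξ : JacIdx d n → ℝ, ξ ≠ 0 ∧
        ∀ i : Fin d, jacMulVec n A B i ξ = fun p => lam i * ξ p) ∧
    ((∀ α : Idx d n, eval lam (P n α) = 0) →
      (fun p : JacIdx d n => eval lam (P (p.1 : ℕ) p.2)) ≠ 0 ∧
      ∀ i : Fin d, jacMulVec n A B i (fun p => eval lam (P (p.1 : ℕ) p.2)) =
        fun p => lam i * eval lam (P (p.1 : ℕ) p.2)) := by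
  
  have fwd : (∀ α : Idx d n, eval lam (P n α) = 0) →
      (fun p : JacIdx d n => eval lam (P (p.1 : ℕ) p.2)) ≠ 0 ∧
      ∀ i : Fin d, jacMulVec n A B i (fun p => eval lam (P (p.1 : ℕ) p.2)) =
        fun p => lam i * eval lam (P (p.1 : ℕ) p.2) := by
    intro hzero
    constructor
    · intro h0
      have hv := congrFun h0 ⟨⟨0, by omega⟩, ⟨fun _ => 0, by simp⟩⟩
      exact CZJE.P0_eval_ne L P hdeg hon lam ⟨fun _ => 0, by simp⟩ (by simpa using hv)
    · intro i
      exact CZJE.forward L P hdeg hspan hon hoff A B hA hB n lam hzero i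
  refine ⟨⟨fun hzero => ⟨_, (fwd hzero).1, (fwd hzero).2⟩, ?_⟩, fwd⟩
  rintro ⟨ξ, hξ, heig⟩
  exact CZJE.converse L P hL hdeg hspan hon hoff A B hA hB n hn lam ξ hξ heig
end
end
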